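/- arXiv:2205.11312 — 5 statements merged into one kernel-verified Lean document; each statement's English description precedes it below -/
import Mathlib

section
/- Let D be a Noetherian integral domain with quotient field K and let T be a flat overring of D. Then Int(D)T = Int(T). -/
open Polynomial

section Preliminaries

variable {K : Type*} [Field K]


/-- The ring `Int(D)` of integer-valued polynomials on a subring `D` of `K`. -/
def intPoly (D : Subring K) : Subring (Polynomial K) where
  carrier := {f : Polynomial K | ∀ d ∈ D, f.eval d ∈ D}
  mul_mem' := fun {f g} hf hg d hd => by
    simpa [Polynomial.eval_mul] using mul_mem (hf d hd) (hg d hd)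
  one_mem' := fun d hd => by simpa using one_mem D
  add_mem' := fun {f g} hf hg d hd => by
    simpa [Polynomial.eval_add] using add_mem (hf d hd) (hg d hd)
  zero_mem' := fun d hd => by simpa using zero_mem D
  neg_mem' := fun {f} hf d hd => by
    simpa [Polynomial.eval_neg] using neg_mem (hf d hd)

@[simp] lemma mem_intPoly {D : Subring K} {f : Polynomial K} :
    f ∈ intPoly D ↔ ∀ d ∈ D, f.eval d ∈ D := Iff.rfl

lemma smul_poly_eq_C_mul (T : Subring K) (t : ↥T) (p : Polynomial K) :
    t • p = Polynomial.C (t : K) * p := by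
  rw [Subring.smul_def, Polynomial.smul_eq_C_mul]

/-- `Int(D)T` : the `T`-submodule of `K[X]` generated by `Int(D)`, which is a subring. -/
def intMul (D T : Subring K) : Subring (Polynomial K) where
  carrier := (Submodule.span ↥T ((intPoly D : Set (Polynomial K))) : Set (Polynomial K))
  zero_mem' := Submodule.zero_mem _
  add_mem' := fun h1 h2 => Submodule.add_mem _ h1 h2
  neg_mem' := fun h => Submodule.neg_mem _ h
  one_mem' := Submodule.subset_span (one_mem (intPoly D))
  mul_mem' := by
    intro p q hp hq
    simp only [SetLike.mem_coe] at *
    induction hp using Submodule.span_induction with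
    | mem x hx =>
      induction hq using Submodule.span_induction with
      | mem y hy => exact Submodule.subset_span (mul_mem hx hy)
      | zero => simpa using Submodule.zero_mem _
      | add y z _ _ hy hz => rw [mul_add]; exact Submodule.add_mem _ hy hz
      | smul t y _ hy =>
        rw [smul_poly_eq_C_mul, ← mul_assoc, mul_comm x (Polynomial.C (t:K)), mul_assoc,
          ← smul_poly_eq_C_mul]
        exact Submodule.smul_mem _ t hy
    | zero => simpa using Submodule.zero_mem _
    | add y z _ _ hy hz => rw [add_mul]; exact Submodule.add_mem _ hy hz
    | smul t y _ hy =>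
      rw [smul_poly_eq_C_mul, mul_assoc, ← smul_poly_eq_C_mul]
      exact Submodule.smul_mem _ t hy

lemma mem_intMul {D T : Subring K} {f : Polynomial K} :
    f ∈ intMul D T ↔ f ∈ Submodule.span ↥T ((intPoly D : Set (Polynomial K))) := Iff.rfl

lemma intPoly_le_intMul (D T : Subring K) : intPoly D ≤ intMul D T :=
  fun _ hf => Submodule.subset_span hf



/-- The localization `D_M` of `D` at a prime ideal `M`, as a subring of `K` (an overring). -/
def locAt (D : Subring K) (M : Ideal ↥D) [hM : M.IsPrime] : Subring K where
  carrier := {x : K | ∃ d s : ↥D, s ∉ M ∧ (s : K) * x = (d : K)}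
  zero_mem' := ⟨0, 1, (Ideal.ne_top_iff_one M).mp hM.ne_top, by simp⟩
  one_mem' := ⟨1, 1, (Ideal.ne_top_iff_one M).mp hM.ne_top, by simp⟩
  add_mem' := by
    rintro x y ⟨d, s, hs, hsx⟩ ⟨e, t, ht, hty⟩
    refine ⟨d * t + e * s, s * t, fun h => ?_, ?_⟩
    · rcases hM.mem_or_mem h with h | h
      exacts [hs h, ht h]
    · push_cast
      calc (s:K) * (t:K) * (x + y) = (t:K) * ((s:K) * x) + (s:K) * ((t:K) * y) := by ring
      _ = (d:K) * (t:K) + (e:K) * (s:K) := by rw [hsx, hty]; ring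
  neg_mem' := by
    rintro x ⟨d, s, hs, hsx⟩
    exact ⟨-d, s, hs, by push_cast; rw [mul_neg, hsx]⟩
  mul_mem' := by
    rintro x y ⟨d, s, hs, hsx⟩ ⟨e, t, ht, hty⟩
    refine ⟨d * e, s * t, fun h => ?_, ?_⟩
    · rcases hM.mem_or_mem h with h | h
      exacts [hs h, ht h]
    · push_cast
      calc (s:K) * (t:K) * (x * y) = ((s:K)*x) * ((t:K)*y) := by ring
      _ = (d:K) * (e:K) := by rw [hsx, hty]

lemma le_locAt (D : Subring K) (M : Ideal ↥D) [hM : M.IsPrime] : D ≤ locAt D M := by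
  intro x hx
  exact ⟨⟨x, hx⟩, 1, (Ideal.ne_top_iff_one M).mp hM.ne_top, by simp⟩

/-- The conductor ideal `(D :_D f(D))` of an integer-valued-polynomial candidate. -/
def condIdeal (D : Subring K) (f : Polynomial K) : Ideal ↥D where
  carrier := {d : ↥D | ∀ c ∈ D, (d : K) * f.eval c ∈ D}
  zero_mem' := fun c _ => by simpa using zero_mem D
  add_mem' := fun {a b} ha hb c hc => by
    have := add_mem (ha c hc) (hb c hc)
    simpa [add_mul] using this
  smul_mem' := fun r d hd c hc => by
    have := mul_mem r.2 (hd c hc)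
    simpa [mul_assoc] using this

/-- The conductor `(T :_T f(D)T)`. -/
def condIdealT (D T : Subring K) (f : Polynomial K) : Ideal ↥T where
  carrier := {t : ↥T | ∀ c ∈ D, (t : K) * f.eval c ∈ T}
  zero_mem' := fun c _ => by simpa using zero_mem T
  add_mem' := fun {a b} ha hb c hc => by
    have := add_mem (ha c hc) (hb c hc)
    simpa [add_mul] using this
  smul_mem' := fun r t ht c hc => by
    have := mul_mem r.2 (ht c hc)
    simpa [mul_assoc] using this

end Preliminaries

section CG

variable {A B : Type*} [CommRing A] [IsDomain A] [CommRing B] [IsDomain B]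

lemma nonZeroDivisors_le_comap_of_injective (f : A →+* B) (hf : Function.Injective f) :
    nonZeroDivisors A ≤ Submonoid.comap f (nonZeroDivisors B) := by
  intro a ha
  simp only [Submonoid.mem_comap]
  refine mem_nonZeroDivisors_of_ne_zero fun h => ?_
  exact nonZeroDivisors.ne_zero ha (hf (by simpa using h))

/-- Extension of fractional ideals along an injective ring homomorphism of domains,
as a monoid homomorphism. -/
noncomputable def extFrac (f : A →+* B) (hf : Function.Injective f) :
    FractionalIdeal (nonZeroDivisors A) (FractionRing A) →*
      FractionalIdeal (nonZeroDivisors B) (FractionRing B) where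
  toFun I := I.extended (FractionRing B) (nonZeroDivisors_le_comap_of_injective f hf)
  map_one' := FractionalIdeal.extended_one _ _
  map_mul' I J := FractionalIdeal.extended_mul _ _ _ _

lemma extFrac_spanSingleton (f : A →+* B) (hf : Function.Injective f) (x : FractionRing A) :
    extFrac f hf (FractionalIdeal.spanSingleton _ x) =
      FractionalIdeal.spanSingleton _
        (IsLocalization.map (FractionRing B) f
          (nonZeroDivisors_le_comap_of_injective f hf) x) := by
  set g := IsLocalization.map (S := FractionRing A) (FractionRing B) f
    (nonZeroDivisors_le_comap_of_injective f hf) with hg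
  apply FractionalIdeal.coeToSubmodule_injective
  show ((FractionalIdeal.spanSingleton (nonZeroDivisors A) x).extended (FractionRing B)
      (nonZeroDivisors_le_comap_of_injective f hf) : Submodule B (FractionRing B)) =
    ((FractionalIdeal.spanSingleton (nonZeroDivisors B) (g x)) : Submodule B (FractionRing B))
  rw [FractionalIdeal.coe_extended_eq_span, FractionalIdeal.coe_spanSingleton]
  apply le_antisymm
  · rw [Submodule.span_le]
    rintro _ ⟨z, hz, rfl⟩
    rw [SetLike.mem_coe, FractionalIdeal.mem_spanSingleton] at hz
    obtain ⟨a, rfl⟩ := hz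
    rw [SetLike.mem_coe, Submodule.mem_span_singleton]
    refine ⟨f a, ?_⟩
    rw [Algebra.smul_def a x, map_mul, IsLocalization.map_eq, Algebra.smul_def]
  · refine Submodule.span_le.mpr (Set.singleton_subset_iff.mpr (Submodule.subset_span ?_))
    exact ⟨x, SetLike.mem_coe.mpr (FractionalIdeal.mem_spanSingleton_self _ x), rfl⟩

/-- The extension map between class groups induced by an injective ring homomorphism of
integral domains. -/
noncomputable def mapCG (f : A →+* B) (hf : Function.Injective f) :
    ClassGroup A →* ClassGroup B := by
  refine QuotientGroup.lift _ ((ClassGroup.mk (FractionRing B)).comp (Units.map (extFrac f hf))) ?_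
  intro x hx
  obtain ⟨u, rfl⟩ := hx
  rw [MonoidHom.mem_ker, MonoidHom.comp_apply, ClassGroup.mk_eq_one_iff]
  have h1 : ((Units.map (extFrac f hf : _ →* _)
        (toPrincipalIdeal A (FractionRing A) u) :
      (FractionalIdeal (nonZeroDivisors B) (FractionRing B))ˣ) :
      FractionalIdeal (nonZeroDivisors B) (FractionRing B)) =
      extFrac f hf (toPrincipalIdeal A (FractionRing A) u) := rfl
  rw [h1, coe_toPrincipalIdeal, extFrac_spanSingleton]
  rw [FractionalIdeal.coe_spanSingleton]
  exact ⟨⟨_, rfl⟩⟩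

end CG

section Homs

variable {K : Type*} [Field K]

lemma subringInclusion_injective {R : Type*} [Ring R] {A B : Subring R} (h : A ≤ B) :
    Function.Injective (Subring.inclusion h) := by
  intro a b hab
  have h2 := congrArg (Subtype.val : ↥B → R) hab
  exact Subtype.ext h2

/-- The constants map `D → Int(D)`. -/
noncomputable def constHom (D : Subring K) : ↥D →+* ↥(intPoly D) where
  toFun d := ⟨Polynomial.C (d : K), fun c hc => by simpa using d.2⟩
  map_one' := Subtype.ext (by push_cast; simp)
  map_mul' a b := Subtype.ext (by push_cast; simp)
  map_zero' := Subtype.ext (by push_cast; simp)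
  map_add' a b := Subtype.ext (by push_cast; simp)

lemma constHom_injective (D : Subring K) : Function.Injective (constHom D) := by
  intro a b hab
  have h2 := congrArg (Subtype.val : {p : Polynomial K // p ∈ _} → Polynomial K) hab
  exact Subtype.ext (Polynomial.C_injective h2)

lemma C_mem_intMul (D T : Subring K) (t : ↥T) : Polynomial.C (t : K) ∈ intMul D T := by
  have h1 := Submodule.smul_mem (Submodule.span ↥T ((intPoly D : Set (Polynomial K)))) t
    (Submodule.subset_span (one_mem (intPoly D)))
  rwa [smul_poly_eq_C_mul, mul_one] at h1

/-- The constants map `T → Int(D)T`. -/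
noncomputable def constHomMul (D T : Subring K) : ↥T →+* ↥(intMul D T) where
  toFun t := ⟨Polynomial.C (t : K), C_mem_intMul D T t⟩
  map_one' := Subtype.ext (by push_cast; simp)
  map_mul' a b := Subtype.ext (by push_cast; simp)
  map_zero' := Subtype.ext (by push_cast; simp)
  map_add' a b := Subtype.ext (by push_cast; simp)

lemma constHomMul_injective (D T : Subring K) : Function.Injective (constHomMul D T) := by
  intro a b hab
  have h2 := congrArg (Subtype.val : ↥(intMul D T) → Polynomial K) hab
  exact Subtype.ext (Polynomial.C_injective h2)

/-- The extension map `Pic(D) → Pic(T)` for an overring `T` of `D`. -/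
noncomputable def picExt {D T : Subring K} (h : D ≤ T) : ClassGroup ↥D →* ClassGroup ↥T :=
  mapCG (Subring.inclusion h) (subringInclusion_injective h)

/-- The extension map `ι_D : Pic(D) → Pic(Int(D))`. -/
noncomputable def iotaPic (D : Subring K) : ClassGroup ↥D →* ClassGroup ↥(intPoly D) :=
  mapCG (constHom D) (constHom_injective D)

/-- The extension map `ι_{D,T} : Pic(T) → Pic(Int(D)T)`. -/
noncomputable def iotaPicMul (D T : Subring K) : ClassGroup ↥T →* ClassGroup ↥(intMul D T) :=
  mapCG (constHomMul D T) (constHomMul_injective D T)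

/-- The extension map `Pic(Int(D)) → Pic(Int(D)T)`. -/
noncomputable def picIntExt (D T : Subring K) :
    ClassGroup ↥(intPoly D) →* ClassGroup ↥(intMul D T) :=
  mapCG (Subring.inclusion (intPoly_le_intMul D T))
    (subringInclusion_injective (intPoly_le_intMul D T))

/-- Transport of class groups along an equality of subrings. -/
noncomputable def cgCongr {R : Type*} [CommRing R] [IsDomain R] {A B : Subring R} (h : A = B) :
    ClassGroup ↥A →* ClassGroup ↥B :=
  mapCG (RingEquiv.subringCongr h).toRingHom (RingEquiv.subringCongr h).injective

/-- The int-polynomial Picard group `Picpol(D) = Pic(Int(D))/ι_D(Pic(D))`. -/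
noncomputable def picpol (D : Subring K) : Type _ :=
  ClassGroup ↥(intPoly D) ⧸ (iotaPic D).range

noncomputable instance (D : Subring K) : CommGroup (picpol D) :=
  QuotientGroup.Quotient.commGroup _

/-- The quotient map `Pic(Int(D)) → Picpol(D)`. -/
noncomputable def picpolMk (D : Subring K) : ClassGroup ↥(intPoly D) →* picpol D :=
  QuotientGroup.mk' _

/-- The relative int-polynomial Picard group `Picpol(D,T) = Pic(Int(D)T)/ι_{D,T}(Pic(T))`. -/
noncomputable def picpolRel (D T : Subring K) : Type _ :=
  ClassGroup ↥(intMul D T) ⧸ (iotaPicMul D T).range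

noncomputable instance (D T : Subring K) : CommGroup (picpolRel D T) :=
  QuotientGroup.Quotient.commGroup _

/-- The quotient map `Pic(Int(D)T) → Picpol(D,T)`. -/
noncomputable def picpolRelMk (D T : Subring K) :
    ClassGroup ↥(intMul D T) →* picpolRel D T :=
  QuotientGroup.mk' _

/-- `Pic(D,Θ)`: classes of `Pic(D)` that become trivial in every `T ∈ Θ`. -/
noncomputable def picRel (D : Subring K) (Θ : Set (Subring K)) (hle : ∀ T ∈ Θ, D ≤ T) :
    Subgroup (ClassGroup ↥D) where
  carrier := {c | ∀ T, ∀ hT : T ∈ Θ, picExt (hle T hT) c = 1}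
  one_mem' := fun T hT => map_one _
  mul_mem' := fun {a b} ha hb T hT => by rw [map_mul, ha T hT, hb T hT, mul_one]
  inv_mem' := fun {a} ha T hT => by rw [map_inv, ha T hT, inv_one]

/-- The subgroup of a product of groups consisting of finitely supported elements
(the direct sum inside the direct product). -/
def finSupportSubgroup {ι : Type*} (G : ι → Type*) [∀ i, CommGroup (G i)] :
    Subgroup (Π i, G i) where
  carrier := {x | {i | x i ≠ 1}.Finite}
  one_mem' := by simp
  mul_mem' := fun {a b} ha hb => Set.Finite.subset (ha.union hb) (fun i hi => by
    by_contra h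
    simp only [Set.mem_union, Set.mem_setOf_eq, not_or, not_not] at h
    exact hi (by simp [h.1, h.2]))
  inv_mem' := fun {a} ha => Set.Finite.subset ha (fun i hi => by
    simp only [Set.mem_setOf_eq, Pi.inv_apply, ne_eq, inv_eq_one] at hi
    exact hi)

end Homs


/-- `B` is flat as an `A`-module, the module structure being induced by the
inclusion `A ≤ B` of subrings. -/
def SubringFlat {R : Type*} [CommRing R] (A B : Subring R) (h : A ≤ B) : Prop :=
  @Module.Flat ↥A ↥B _ _ (@Algebra.toModule _ _ _ _ ((Subring.inclusion h).toAlgebra))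

section Families

variable {K : Type*} [Field K]

/-- A Jaffard family of the integral domain `D`. -/
structure IsJaffardFamily (D : Subring K) (Θ : Set (Subring K)) : Prop where
  le : ∀ T ∈ Θ, D ≤ T
  top : Θ = {(⊤ : Subring K)} ∨ (⊤ : Subring K) ∉ Θ
  flat : ∀ T, ∀ hT : T ∈ Θ, SubringFlat D T (le T hT)
  complete : ∀ I : Ideal ↥D, ∀ x : ↥D,
    x ∈ I ↔ ∀ T ∈ Θ, (x : K) ∈ Submodule.span ↥T ((fun d : ↥D => (d : K)) '' (I : Set ↥D))
  independent : ∀ T ∈ Θ, ∀ T' ∈ Θ, T ≠ T' → T ⊔ T' = ⊤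
  locallyFinite : ∀ x : K, x ∈ D → x ≠ 0 → {T ∈ Θ | ¬ ∃ y ∈ T, x * y = 1}.Finite

/-- A t-Jaffard family of the integral domain `D`. -/
structure IsTJaffardFamily (D : Subring K) (Θ : Set (Subring K)) : Prop where
  le : ∀ T ∈ Θ, D ≤ T
  top : Θ = {(⊤ : Subring K)} ∨ (⊤ : Subring K) ∉ Θ
  flat : ∀ T, ∀ hT : T ∈ Θ, SubringFlat D T (le T hT)
  independent : ∀ T ∈ Θ, ∀ T' ∈ Θ, T ≠ T' → T ⊔ T' = ⊤
  locallyFinite : ∀ x : K, x ∈ D → x ≠ 0 → {T ∈ Θ | ¬ ∃ y ∈ T, x * y = 1}.Finite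
  inter : ∀ x : K, x ∈ D ↔ ∀ T ∈ Θ, x ∈ T

/-- The Zariski topology on the space of subrings of `K`, whose subbasic open sets are
`B(x) = {T ∣ x ∈ T}`. -/
def zariskiTopOverrings (K : Type*) [Field K] : TopologicalSpace (Subring K) :=
  TopologicalSpace.generateFrom {U | ∃ x : K, U = {T : Subring K | x ∈ T}}

/-- A pre-Jaffard family of the integral domain `D`. -/
structure IsPreJaffardFamily (D : Subring K) (Θ : Set (Subring K)) : Prop where
  le : ∀ T ∈ Θ, D ≤ T
  top : Θ = {(⊤ : Subring K)} ∨ (⊤ : Subring K) ∉ Θ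
  flat : ∀ T, ∀ hT : T ∈ Θ, SubringFlat D T (le T hT)
  complete : ∀ I : Ideal ↥D, ∀ x : ↥D,
    x ∈ I ↔ ∀ T ∈ Θ, (x : K) ∈ Submodule.span ↥T ((fun d : ↥D => (d : K)) '' (I : Set ↥D))
  independent : ∀ T ∈ Θ, ∀ T' ∈ Θ, T ≠ T' → T ⊔ T' = ⊤
  compact : @IsCompact (Subring K) (zariskiTopOverrings K) Θ

/-- A Jaffard overring: a member of some Jaffard family of `D`. -/
def IsJaffardOverring (D T : Subring K) : Prop :=
  ∃ Θ : Set (Subring K), IsJaffardFamily D Θ ∧ T ∈ Θ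

/-- A t-Jaffard overring: a member of some t-Jaffard family of `D`. -/
def IsTJaffardOverring (D T : Subring K) : Prop :=
  ∃ Θ : Set (Subring K), IsTJaffardFamily D Θ ∧ T ∈ Θ

/-- A weak Jaffard family pointed at `Tinf`: a pre-Jaffard family whose set of members
that are not Jaffard overrings of `D` is exactly `{Tinf}`. -/
def IsWeakJaffardFamily (D : Subring K) (Θ : Set (Subring K)) (Tinf : Subring K) : Prop :=
  IsPreJaffardFamily D Θ ∧ {T ∈ Θ | ¬ IsJaffardOverring D T} = {Tinf}

end Families

section S6Aux

open Polynomial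

variable {K : Type*} [Field K]

lemma s6_coe_ne_zero {D : Subring K} {P : Ideal ↥D} [P.IsPrime] {s : ↥D} (hs : s ∉ P) :
    (s : K) ≠ 0 := by
  intro h
  have : s = 0 := Subtype.ext h
  exact hs (this ▸ P.zero_mem)

lemma s6_inv_mem_locAt {D : Subring K} {P : Ideal ↥D} [P.IsPrime] {s : ↥D} (hs : s ∉ P) :
    (s : K)⁻¹ ∈ locAt D P :=
  ⟨1, s, hs, by rw [mul_inv_cancel₀ (s6_coe_ne_zero hs)]; simp⟩

lemma s6_one_not_mem {D : Subring K} {P : Ideal ↥D} [hPp : P.IsPrime] : (1 : ↥D) ∉ P :=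
  (Ideal.ne_top_iff_one P).mp hPp.ne_top

lemma s6_isLocalization (D : Subring K) (P : Ideal ↥D) [P.IsPrime] :
    @IsLocalization ↥D _ P.primeCompl ↥(locAt D P) _
      ((Subring.inclusion (le_locAt D P)).toAlgebra) := by
  letI := (Subring.inclusion (le_locAt D P)).toAlgebra
  have halg : ∀ d : ↥D, (algebraMap ↥D ↥(locAt D P) d : K) = (d : K) := fun d => rfl
  rw [isLocalization_iff]; refine ⟨?_, ?_, ?_⟩
  · rintro ⟨s, hs⟩
    refine isUnit_iff_exists_inv.mpr ⟨⟨(s:K)⁻¹, s6_inv_mem_locAt hs⟩, ?_⟩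
    apply Subtype.ext
    show (algebraMap ↥D ↥(locAt D P) s : K) * (s:K)⁻¹ = 1
    rw [halg, mul_inv_cancel₀ (s6_coe_ne_zero hs)]
  · rintro ⟨z, d, s, hs, h⟩
    refine ⟨(d, ⟨s, hs⟩), Subtype.ext ?_⟩
    show z * (s : K) = (d : K)
    rw [mul_comm]; exact h
  · intro x y h
    refine ⟨1, ?_⟩
    have hxy : (x : K) = (y : K) := congrArg (Subtype.val : ↥(locAt D P) → K) h
    simp [Subtype.ext hxy]

/-- Krull intersection style lemma. -/
lemma s6_krull {R : Type*} [CommRing R] [IsNoetherianRing R] [IsLocalRing R]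
    (J m : Ideal R) (hm : m ≠ ⊤) {x : R} (hx : ∀ n : ℕ, x ∈ J ⊔ m ^ n) : x ∈ J := by
  by_cases hJ : J = ⊤
  · rw [hJ]; trivial
  haveI : Nontrivial (R ⧸ J) := Ideal.Quotient.nontrivial_iff.mpr hJ
  haveI : IsLocalRing (R ⧸ J) := IsLocalRing.of_surjective' _ Ideal.Quotient.mk_surjective
  haveI : IsNoetherianRing (R ⧸ J) :=
    isNoetherianRing_of_surjective R _ (Ideal.Quotient.mk J) Ideal.Quotient.mk_surjective
  set mk := Ideal.Quotient.mk J with hmk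
  have hmbar : m.map mk ≠ ⊤ := by
    intro htop
    have h1 : (1 : R ⧸ J) ∈ m.map mk := htop ▸ trivial
    obtain ⟨r, hr, hr1⟩ := (Ideal.mem_map_iff_of_surjective mk Ideal.Quotient.mk_surjective).mp h1
    have h1r : (1 : R) - r ∈ J := by
      have : mk (1 - r) = 0 := by rw [map_sub, hr1]; simp
      exact (Ideal.Quotient.eq_zero_iff_mem).mp this
    have hmax : (1 : R) ∈ IsLocalRing.maximalIdeal R := by
      have := add_mem (IsLocalRing.le_maximalIdeal hm hr)
        (IsLocalRing.le_maximalIdeal hJ h1r)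
      simpa using this
    exact (IsLocalRing.maximalIdeal.isMaximal R).ne_top (Ideal.eq_top_of_isUnit_mem _ hmax isUnit_one)
  have hbot : (⨅ n : ℕ, (m.map mk) ^ n) = ⊥ :=
    Ideal.iInf_pow_eq_bot_of_isLocalRing _ hmbar
  have hx0 : mk x ∈ (⨅ n : ℕ, (m.map mk) ^ n) := by
    refine Ideal.mem_iInf.mpr fun n => ?_
    obtain ⟨j, hj, w, hw, hjw⟩ := Submodule.mem_sup.mp (hx n)
    have : mk x = mk w := by
      rw [← hjw, map_add, Ideal.Quotient.eq_zero_iff_mem.mpr hj, zero_add]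
    rw [this, ← Ideal.map_pow]
    exact Ideal.mem_map_of_mem mk hw
  rw [hbot] at hx0
  exact Ideal.Quotient.eq_zero_iff_mem.mp (Submodule.mem_bot _ |>.mp hx0)

end S6Aux
section S6Lagrange

open Polynomial

variable {K : Type*} [Field K]

lemma s6_eval_mem_locAt_of_not_max {D : Subring K} (P : Ideal ↥D) [hPp : P.IsPrime]
    (hP : ¬ P.IsMaximal) {f : K[X]} (hf : ∀ d ∈ D, f.eval d ∈ D)
    {t : K} (ht : t ∈ locAt D P) : f.eval t ∈ locAt D P := by
  classical
  haveI : Infinite (↥D ⧸ P) := by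
    rw [← not_finite_iff_infinite]
    intro hfin
    haveI : IsDomain (↥D ⧸ P) := Ideal.Quotient.isDomain P
    exact hP (Ideal.Quotient.maximal_of_isField P (Finite.isField_of_domain _))
  set n := f.natDegree with hn
  -- choose nodes with pairwise distinct residues
  let emb : Fin (n + 1) ↪ ↥D ⧸ P := (Fin.valEmbedding.trans (Infinite.natEmbedding _))
  have hv : ∀ i : Fin (n + 1), ∃ d : ↥D, Ideal.Quotient.mk P d = emb i := fun i =>
    Ideal.Quotient.mk_surjective (emb i)
  choose v hvv using hv
  set w : Fin (n + 1) → K := fun i => (v i : K) with hw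
  have hinj : Set.InjOn w (Finset.univ : Finset (Fin (n+1))) := by
    intro i _ j _ hij
    have : v i = v j := Subtype.ext hij
    have : emb i = emb j := by rw [← hvv, ← hvv, this]
    exact emb.injective this
  have hsub : ∀ i j : Fin (n+1), i ≠ j → (v i - v j) ∉ P := by
    intro i j hij hmem
    have : Ideal.Quotient.mk P (v i) = Ideal.Quotient.mk P (v j) :=
      Ideal.Quotient.eq.mpr hmem
    rw [hvv, hvv] at this
    exact hij (emb.injective this)
  have hdeg : f.degree < ((Finset.univ : Finset (Fin (n+1))).card : ℕ) := by
    rw [Finset.card_univ, Fintype.card_fin]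
    exact lt_of_le_of_lt degree_le_natDegree (by exact_mod_cast Nat.lt_succ_self n)
  have hrep := Lagrange.eq_interpolate (f := f) hinj hdeg
  rw [hrep]
  rw [Lagrange.interpolate_apply, eval_finset_sum]
  refine sum_mem fun i _ => ?_
  rw [eval_mul, eval_C]
  refine mul_mem (le_locAt D P (hf _ (v i).2)) ?_
  unfold Lagrange.basis
  rw [eval_prod]
  refine prod_mem fun j hj => ?_
  rw [Lagrange.basisDivisor, eval_mul, eval_C, eval_sub, eval_X, eval_C]
  have hij : i ≠ j := fun h => (Finset.mem_erase.mp hj).1 h.symm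
  refine mul_mem ?_ (sub_mem ht (le_locAt D P (v j).2))
  have : w i - w j = ((v i - v j : ↥D) : K) := by push_cast; ring
  rw [this]
  exact s6_inv_mem_locAt (hsub i j hij)

end S6Lagrange
section S6Max

open Polynomial

variable {K : Type*} [Field K]

lemma s6_eval_mem_locAt_of_max {D : Subring K} [IsFractionRing ↥D K] [IsNoetherianRing ↥D]
    (P : Ideal ↥D) [hPp : P.IsPrime] (hP : P.IsMaximal) {f : K[X]}
    (hf : ∀ d ∈ D, f.eval d ∈ D) {t : K} (ht : t ∈ locAt D P) : f.eval t ∈ locAt D P := by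
  classical
  obtain ⟨b, hb⟩ := IsLocalization.integerNormalization_map_to_map (nonZeroDivisors ↥D) f
  set g : Polynomial ↥D := IsLocalization.integerNormalization (nonZeroDivisors ↥D) f with hg
  set c : ↥D := (b : ↥D) with hc
  have hcne : c ≠ 0 := nonZeroDivisors.ne_zero b.2
  have hc0 : (c : K) ≠ 0 := fun h => hcne (Subtype.ext h)
  letI := (Subring.inclusion (le_locAt D P)).toAlgebra
  haveI hisloc : IsLocalization P.primeCompl ↥(locAt D P) := s6_isLocalization D P
  haveI : IsNoetherianRing ↥(locAt D P) :=
    IsLocalization.isNoetherianRing P.primeCompl _ (by infer_instance)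
  haveI : IsLocalRing ↥(locAt D P) := IsLocalization.AtPrime.isLocalRing _ P
  set ι : ↥D →+* ↥(locAt D P) := Subring.inclusion (le_locAt D P) with hι
  set tR : ↥(locAt D P) := ⟨t, ht⟩ with htR
  set x : ↥(locAt D P) := (g.map ι).eval tR with hx
  have halg : algebraMap ↥D K = D.subtype := rfl
  have hxK : (x : K) = (c : K) * f.eval t := by
    show (locAt D P).subtype ((g.map ι).eval tR) = _
    rw [Polynomial.eval_map, Polynomial.hom_eval₂]
    have h2 : ((locAt D P).subtype).comp ι = algebraMap ↥D K := by ext d; rfl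
    rw [h2, ← Polynomial.eval_map, hb, Polynomial.eval_smul, Subring.smul_def]
    rfl
  have key : ∀ n : ℕ, x ∈ Ideal.span {ι c} ⊔ (P.map ι) ^ n := by
    intro n
    obtain ⟨a, s, hs, hst⟩ := ht
    have htop : Ideal.span {s} ⊔ P ^ n = ⊤ := by
      by_contra hne
      obtain ⟨M, hM, hle⟩ := Ideal.exists_le_maximal _ hne
      have hPM : P ≤ M := hM.isPrime.le_of_pow_le (le_trans le_sup_right hle)
      have hsM : s ∈ M := hle (Ideal.mem_sup_left (Ideal.subset_span rfl))
      rw [← hP.eq_of_le hM.ne_top hPM] at hsM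
      exact hs hsM
    have h1 : (1 : ↥D) ∈ Ideal.span {s} ⊔ P ^ n := htop ▸ trivial
    obtain ⟨u, hu, z, hz, huz⟩ := Submodule.mem_sup.mp h1
    obtain ⟨y, hy⟩ := Ideal.mem_span_singleton'.mp hu
    set d : ↥D := a * y with hd
    have htd : t - (d : K) = (z : K) * t := by
      have ha : (s : K) * t = (a : K) := hst
      have hu1 : (u : K) + (z : K) = 1 := by exact_mod_cast congrArg Subtype.val huz
      have hys : (y : K) * (s : K) = (u : K) := by exact_mod_cast congrArg Subtype.val hy
      have hay : ((d : ↥D) : K) = (1 - (z : K)) * t := by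
        push_cast [hd]
        rw [← hu1, ← hys]
        calc (a:K) * y = (y * s) * t := by rw [mul_assoc, ha]; ring
        _ = (y * s + z - z) * t := by ring
        _ = _ := by ring
      rw [hay]; ring
    obtain ⟨q, hq⟩ := sub_dvd_eval_sub tR (ι d) (g.map ι)
    have hevald : (g.map ι).eval (ι d) = ι (g.eval d) := by
      rw [Polynomial.eval_map]; exact Polynomial.eval₂_hom ι d
    have hfd : f.eval (d : K) ∈ D := hf _ d.2
    have hgd : g.eval d = c * ⟨f.eval (d : K), hfd⟩ := by
      apply Subtype.ext
      have h5 : (D.subtype) (g.eval d) = (g.map D.subtype).eval ((d : ↥D) : K) := by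
        rw [Polynomial.eval_map]; exact (Polynomial.eval₂_hom D.subtype d).symm
      have h6 : g.map D.subtype = (c : ↥D) • f := by rw [← halg]; exact hb
      show (D.subtype) (g.eval d) = (c : K) * f.eval (d : K)
      rw [h5, h6, Polynomial.eval_smul]
      rfl
    have hxeq : x = ι (g.eval d) + (tR - ι d) * q := by
      rw [← hevald]
      have := sub_eq_iff_eq_add.mp hq
      rw [hx, this]; ring
    have hzt : tR - ι d = ι z * tR := by
      apply Subtype.ext
      show t - (d : K) = (z : K) * t
      exact htd
    refine Submodule.mem_sup.mpr ⟨ι (g.eval d), ?_, (tR - ι d) * q, ?_, hxeq.symm⟩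
    · rw [hgd, map_mul]
      exact Ideal.mem_span_singleton'.mpr ⟨ι _, mul_comm _ _⟩
    · rw [hzt, mul_assoc]
      refine Ideal.mul_mem_right _ _ ?_
      rw [← Ideal.map_pow]
      exact Ideal.mem_map_of_mem ι hz
  have hmtop : P.map ι ≠ ⊤ := by
    have hle : P.map ι ≤ IsLocalRing.maximalIdeal ↥(locAt D P) := by
      rw [Ideal.map_le_iff_le_comap]
      have hia : ι = algebraMap ↥D ↥(locAt D P) := rfl
      rw [hia]; exact (IsLocalization.AtPrime.comap_maximalIdeal ↥(locAt D P) P).ge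
    exact fun h => (IsLocalRing.maximalIdeal.isMaximal _).ne_top (top_le_iff.mp (h ▸ hle))
  have hxJ : x ∈ Ideal.span {ι c} := s6_krull _ _ hmtop key
  obtain ⟨r, hr⟩ := Ideal.mem_span_singleton'.mp hxJ
  have hrK : (r : K) * (c : K) = (c : K) * f.eval t := by
    rw [← hxK]
    have h7 : ((r * ι c : ↥(locAt D P)) : K) = (x : K) :=
      congrArg (Subtype.val : ↥(locAt D P) → K) hr
    exact h7
  have : f.eval t = (r : K) := by
    apply mul_left_cancel₀ hc0
    rw [← hrK]; ring
  rw [this]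
  exact r.2

lemma s6_eval_mem_locAt {D : Subring K} [IsFractionRing ↥D K] [IsNoetherianRing ↥D]
    (P : Ideal ↥D) [hPp : P.IsPrime] {f : K[X]}
    (hf : ∀ d ∈ D, f.eval d ∈ D) {t : K} (ht : t ∈ locAt D P) : f.eval t ∈ locAt D P := by
  by_cases hP : P.IsMaximal
  · exact s6_eval_mem_locAt_of_max P hP hf ht
  · exact s6_eval_mem_locAt_of_not_max P hP hf ht

end S6Max
section S6Flat

open Polynomial

universe u

lemma s6_sum_ulift {M : Type*} [AddCommMonoid M] (G : ULift.{u} (Fin 2) → M) :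
    ∑ i, G i = G (ULift.up 0) + G (ULift.up 1) := by
  rw [← Fin.sum_univ_two (fun i => G (ULift.up i))]
  exact Fintype.sum_equiv Equiv.ulift G (fun i => G (ULift.up i)) (fun i => rfl)

variable {K : Type u} [Field K]

lemma s6_conductor {D T : Subring K} [IsFractionRing ↥D K]
    (hDT : D ≤ T) (hflat : SubringFlat D T hDT) {t : K} (ht : t ∈ T) :
    ∃ (κ : Type) (_ : Fintype κ) (d : κ → ↥D) (y : κ → ↥T),
      (∀ j, (d j : K) * t ∈ D) ∧ ∑ j, (d j : K) * (y j : K) = 1 := by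
  classical
  obtain ⟨⟨a, b⟩, hab⟩ := IsLocalization.surj (nonZeroDivisors ↥D) t
  have habK : t * ((b : ↥D) : K) = (a : K) := hab
  have hb0 : ((b : ↥D) : K) ≠ 0 := fun h => nonZeroDivisors.ne_zero b.2 (Subtype.ext h)
  letI : Algebra ↥D ↥T := (Subring.inclusion hDT).toAlgebra
  haveI hfl : Module.Flat ↥D ↥T := hflat
  have hsm : ∀ (r : ↥D) (m : ↥T), ((r • m : ↥T) : K) = (r : K) * (m : K) := by
    intro r m; rw [Algebra.smul_def]; rfl
  set F : ULift.{u} (Fin 2) → ↥D := fun i => if i.down = 0 then (b : ↥D) else -a with hF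
  set X : ULift.{u} (Fin 2) → ↥T := fun i => if i.down = 0 then ⟨t, ht⟩ else 1 with hX
  have hrel : ∑ i, F i • X i = 0 := by
    apply Subtype.ext
    rw [AddSubmonoidClass.coe_finset_sum]
    have h2 : ∀ i, ((F i • X i : ↥T) : K) = (F i : K) * (X i : K) := fun i => hsm _ _
    calc ∑ i, ((F i • X i : ↥T) : K) = ∑ i, (F i : K) * (X i : K) :=
          Finset.sum_congr rfl fun i _ => h2 i
      _ = (F (ULift.up 0) : K) * (X (ULift.up 0) : K)
          + (F (ULift.up 1) : K) * (X (ULift.up 1) : K) := s6_sum_ulift _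
      _ = ((b : ↥D) : K) * t + (-(a : K)) * 1 := by
          simp [hF, hX]
      _ = 0 := by rw [mul_comm ((b : ↥D) : K) t, habK]; ring
  obtain ⟨κ, A, y, hxy, hA⟩ :=
    @Module.Flat.isTrivialRelation_of_sum_smul_eq_zero ↥D ↥T _ _ _ hfl _ _ F X hrel
  refine ⟨Fin κ, inferInstance, fun j => A (ULift.up 1) j, y, ?_, ?_⟩
  · intro j
    have h4 : (b : ↥D) * A (ULift.up 0) j = a * A (ULift.up 1) j := by
      have h3 := hA j
      rw [s6_sum_ulift (fun i => F i * A i j)] at h3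
      simp only [hF] at h3
      simp at h3
      linear_combination h3
    have h5 : ((b : ↥D) : K) * (A (ULift.up 0) j : K)
        = (a : K) * (A (ULift.up 1) j : K) := by exact_mod_cast congrArg Subtype.val h4
    have h6 : (A (ULift.up 1) j : K) * t = (A (ULift.up 0) j : K) := by
      apply mul_left_cancel₀ hb0
      rw [h5, ← habK]; ring
    rw [h6]
    exact (A (ULift.up 0) j).2
  · have h7 : (1 : ↥T) = ∑ j, A (ULift.up 1) j • y j := by
      have := hxy (ULift.up 1)
      simpa [hX] using this
    have h8 : ((1 : ↥T) : K) = ∑ j, (A (ULift.up 1) j : K) * (y j : K) := by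
      rw [h7, AddSubmonoidClass.coe_finset_sum]
      exact Finset.sum_congr rfl fun j _ => hsm _ _
    exact h8.symm

/-- The ideal of `T` of denominators of `x`. -/
def s6_divIdeal (T : Subring K) (x : K) : Ideal ↥T where
  carrier := {s : ↥T | (s : K) * x ∈ T}
  zero_mem' := by simpa using T.zero_mem
  add_mem' := fun {a b} ha hb => by
    have h := T.add_mem ha hb
    simpa [add_mul] using h
  smul_mem' := fun r s hs => by
    have h := T.mul_mem r.2 hs
    simpa [smul_eq_mul, mul_assoc] using h

lemma s6_mem_of_divIdeal (T : Subring K) (x : K)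
    (h : ∀ M : Ideal ↥T, M.IsMaximal → ∃ s : ↥T, s ∈ s6_divIdeal T x ∧ s ∉ M) : x ∈ T := by
  have htop : s6_divIdeal T x = ⊤ := by
    by_contra hne
    obtain ⟨M, hM, hle⟩ := Ideal.exists_le_maximal _ hne
    obtain ⟨s, hs, hsM⟩ := h M hM
    exact hsM (hle hs)
  have h1 : (1 : ↥T) ∈ s6_divIdeal T x := htop ▸ trivial
  have h2 : ((1 : ↥T) : K) * x ∈ T := h1
  simpa using h2

lemma s6_mem_locAt_of_flat {D T : Subring K} [IsFractionRing ↥D K]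
    (hDT : D ≤ T) (hflat : SubringFlat D T hDT) (M : Ideal ↥T) (hM : M.IsMaximal)
    {t : K} (ht : t ∈ T) : t ∈ locAt D (M.comap (Subring.inclusion hDT)) := by
  obtain ⟨κ, hκ, d, y, hdt, hsum⟩ := s6_conductor hDT hflat ht
  have hex : ∃ j : κ, Subring.inclusion hDT (d j) ∉ M := by
    by_contra hall
    push_neg at hall
    have h1 : (1 : ↥T) ∈ M := by
      have h2 : (∑ j, Subring.inclusion hDT (d j) * y j : ↥T) = 1 := by
        apply Subtype.ext
        rw [AddSubmonoidClass.coe_finset_sum]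
        exact hsum
      rw [← h2]
      exact Ideal.sum_mem _ fun j _ => Ideal.mul_mem_right _ _ (hall j)
    exact hM.ne_top ((Ideal.eq_top_iff_one M).mpr h1)
  obtain ⟨j, hj⟩ := hex
  exact ⟨⟨(d j : K) * t, hdt j⟩, d j, fun hc => hj (Ideal.mem_comap.mp hc), rfl⟩

end S6Flat
section S6Final

open Polynomial

universe u

variable {K : Type u} [Field K]

lemma s6_span_le_subring {D C : Subring K} (hDC : D ≤ C) {S : Set K}
    (hS : ∀ y ∈ S, y ∈ C) {x : K} (hx : x ∈ Submodule.span ↥D S) : x ∈ C := by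
  induction hx using Submodule.span_induction with
  | mem y hy => exact hS y hy
  | zero => exact C.zero_mem
  | add y z _ _ hy hz => exact C.add_mem hy hz
  | smul r y _ hy =>
    have h : (r • y : K) = (r : K) * y := Subring.smul_def r y
    rw [h]; exact C.mul_mem (hDC r.2) hy

lemma s6_stepA {D T : Subring K} [IsFractionRing ↥D K] [IsNoetherianRing ↥D]
    (hDT : D ≤ T) (hflat : SubringFlat D T hDT) {f : K[X]} (hf : f ∈ intPoly D)
    {t : K} (ht : t ∈ T) : f.eval t ∈ T := by
  refine s6_mem_of_divIdeal T (f.eval t) fun M hM => ?_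
  haveI := hM.isPrime
  have htP : t ∈ locAt D (M.comap (Subring.inclusion hDT)) :=
    s6_mem_locAt_of_flat hDT hflat M hM ht
  have hev : f.eval t ∈ locAt D (M.comap (Subring.inclusion hDT)) :=
    s6_eval_mem_locAt _ hf htP
  obtain ⟨a, s, hs, hst⟩ := hev
  refine ⟨⟨(s : K), hDT s.2⟩, ?_, ?_⟩
  · show ((s : K)) * f.eval t ∈ T
    rw [hst]
    exact hDT a.2
  · intro hc
    exact hs (Ideal.mem_comap.mpr hc)

lemma s6_denom_span (D : Subring K) (P : Ideal ↥D) [hPp : P.IsPrime]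
    (G : Finset K) (hG : ∀ x ∈ G, x ∈ locAt D P) :
    ∃ dP : ↥D, dP ∉ P ∧ ∀ w ∈ Submodule.span ↥D (G : Set K), (dP : K) * w ∈ D := by
  classical
  induction G using Finset.induction_on with
  | empty =>
    refine ⟨1, s6_one_not_mem, fun w hw => ?_⟩
    simp only [Finset.coe_empty, Submodule.span_empty, Submodule.mem_bot] at hw
    simpa [hw] using D.zero_mem
  | @insert x G hx ih =>
    obtain ⟨d0, hd0, hd0w⟩ := ih (fun y hy => hG y (Finset.mem_insert_of_mem hy))
    obtain ⟨ax, sx, hsx, hsxx⟩ := hG x (Finset.mem_insert_self x G)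
    refine ⟨sx * d0, fun hc => ?_, fun w hw => ?_⟩
    · rcases hPp.mem_or_mem hc with h | h
      exacts [hsx h, hd0 h]
    · rw [Finset.coe_insert, Submodule.span_insert] at hw
      obtain ⟨w1, hw1, w2, hw2, rfl⟩ := Submodule.mem_sup.mp hw
      obtain ⟨r, rfl⟩ := Submodule.mem_span_singleton.mp hw1
      have hrsmul : (r • x : K) = (r : K) * x := Subring.smul_def r x
      have e1 : ((sx * d0 : ↥D) : K) * ((r • x : K) + w2)
          = ((d0 * r * ax : ↥D) : K) + (sx : K) * ((d0 : K) * w2) := by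
        push_cast
        rw [hrsmul, ← hsxx]; ring
      rw [e1]
      exact D.add_mem (d0 * r * ax).2 (D.mul_mem sx.2 (hd0w w2 hw2))

lemma s6_stepB {D T : Subring K} [IsFractionRing ↥D K] [IsNoetherianRing ↥D]
    (hDT : D ≤ T) (hflat : SubringFlat D T hDT) {f : K[X]} (hf : f ∈ intPoly T) :
    f ∈ intMul D T := by
  classical
  obtain ⟨b, hb⟩ := IsLocalization.integerNormalization_map_to_map (nonZeroDivisors ↥D) f
  set g := IsLocalization.integerNormalization (nonZeroDivisors ↥D) f with hg
  set c : ↥D := (b : ↥D) with hc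
  have hcne : c ≠ 0 := nonZeroDivisors.ne_zero b.2
  have hc0 : (c : K) ≠ 0 := fun h => hcne (Subtype.ext h)
  have hcd : ∀ d : ↥D, (c : K) * f.eval (d : K) ∈ D := by
    intro d
    have h5 : (D.subtype) (g.eval d) = (g.map D.subtype).eval ((d : ↥D) : K) := by
      rw [Polynomial.eval_map]; exact (Polynomial.eval₂_hom D.subtype d).symm
    have h6 : g.map D.subtype = (c : ↥D) • f := hb
    have h7 : (D.subtype) (g.eval d) = (c : K) * f.eval (d : K) := by
      rw [h5, h6, Polynomial.eval_smul]; rfl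
    rw [← h7]; exact (g.eval d).2
  set S : Set K := Set.range (fun d : ↥D => f.eval (d : K)) with hS
  set N : Submodule ↥D K := Submodule.span ↥D {(c : K)⁻¹} with hN
  set W : Submodule ↥D K := Submodule.span ↥D S with hW
  have hWN : W ≤ N := by
    rw [hW, Submodule.span_le]
    rintro _ ⟨d, rfl⟩
    rw [SetLike.mem_coe, hN, Submodule.mem_span_singleton]
    refine ⟨⟨(c : K) * f.eval (d : K), hcd d⟩, ?_⟩
    have hsm : ((⟨(c : K) * f.eval (d : K), hcd d⟩ : ↥D) • ((c : K)⁻¹) : K)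
        = ((c : K) * f.eval (d : K)) * (c : K)⁻¹ := Subring.smul_def _ _
    rw [hsm]
    field_simp
  have hNfg : N.FG := Submodule.fg_span_singleton _
  haveI : IsNoetherian ↥D ↥N := isNoetherian_of_fg_of_noetherian N hNfg
  have hWfg : W.FG := by
    have h1 : (W.comap N.subtype).FG := IsNoetherian.noetherian _
    have h2 : (W.comap N.subtype).map N.subtype = W := by
      rw [Submodule.map_comap_subtype]
      exact inf_eq_right.mpr hWN
    rw [← h2]; exact h1.map _
  obtain ⟨G, hGW⟩ := hWfg
  have hstep : ∀ M : Ideal ↥T, M.IsMaximal →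
      ∃ dP : ↥D, (∀ cc : ↥D, (dP : K) * f.eval (cc : K) ∈ D) ∧
        Subring.inclusion hDT dP ∉ M := by
    intro M hM
    haveI := hM.isPrime
    have hSloc : ∀ y ∈ S, y ∈ locAt D (M.comap (Subring.inclusion hDT)) := by
      rintro _ ⟨d, rfl⟩
      exact s6_mem_locAt_of_flat hDT hflat M hM (hf _ (hDT d.2))
    have hGloc : ∀ x ∈ G, x ∈ locAt D (M.comap (Subring.inclusion hDT)) := by
      intro x hxG
      have hxW : x ∈ W := hGW ▸ Submodule.subset_span hxG
      rw [hW] at hxW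
      exact s6_span_le_subring (le_locAt D _) hSloc hxW
    obtain ⟨dP, hdP, hdPw⟩ := s6_denom_span D _ G hGloc
    refine ⟨dP, fun cc => ?_, fun hc => hdP (Ideal.mem_comap.mpr hc)⟩
    have hfw : f.eval (cc : K) ∈ W := hW ▸ Submodule.subset_span ⟨cc, rfl⟩
    rw [← hGW] at hfw
    exact hdPw _ hfw
  set V : Ideal ↥T :=
    { carrier := {u : ↥T |
        (Polynomial.C (u : K)) * f ∈ Submodule.span ↥T ((intPoly D : Set (Polynomial K)))}
      zero_mem' := by
        show (Polynomial.C ((0 : ↥T) : K)) * f ∈ Submodule.span ↥T ((intPoly D : Set (Polynomial K)))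
        have h0 : ((0 : ↥T) : K) = 0 := rfl
        rw [h0, map_zero, zero_mul]
        exact Submodule.zero_mem _
      add_mem' := by
        intro u v hu hv
        show (Polynomial.C ((u + v : ↥T) : K)) * f ∈ Submodule.span ↥T ((intPoly D : Set (Polynomial K)))
        have hadd : ((u + v : ↥T) : K) = (u : K) + (v : K) := rfl
        rw [hadd, map_add, add_mul]
        exact Submodule.add_mem _ hu hv
      smul_mem' := by
        intro r u hu
        show (Polynomial.C ((r * u : ↥T) : K)) * f ∈ Submodule.span ↥T ((intPoly D : Set (Polynomial K)))
        have hmul : ((r * u : ↥T) : K) = (r : K) * (u : K) := rfl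
        rw [hmul, map_mul, mul_assoc, ← smul_poly_eq_C_mul]
        exact Submodule.smul_mem _ r hu } with hV
  have hVtop : V = ⊤ := by
    by_contra hne
    obtain ⟨M, hM, hle⟩ := Ideal.exists_le_maximal _ hne
    obtain ⟨dP, hdPD, hdPM⟩ := hstep M hM
    have hthis : (Polynomial.C ((dP : ↥D) : K)) * f ∈ intPoly D := by
      intro d hd
      rw [Polynomial.eval_mul, Polynomial.eval_C]
      exact hdPD ⟨d, hd⟩
    have hmem : Subring.inclusion hDT dP ∈ V := by
      show (Polynomial.C ((Subring.inclusion hDT dP : ↥T) : K)) * f ∈ Submodule.span ↥T ((intPoly D : Set (Polynomial K)))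
      exact Submodule.subset_span hthis
    exact hdPM (hle hmem)
  have h1V : (1 : ↥T) ∈ V := hVtop ▸ trivial
  have hf1 : (Polynomial.C ((1 : ↥T) : K)) * f ∈
      Submodule.span ↥T ((intPoly D : Set (Polynomial K))) := h1V
  rw [mem_intMul]
  simpa using hf1

end S6Final

/-- Let `D` be a Noetherian integral domain with quotient field `K` and let `T`
be a flat overring of `D`. Then `Int(D)T = Int(T)`. -/
theorem statement6 {K : Type*} [Field K] (D : Subring K) [IsFractionRing ↥D K]
    [IsNoetherianRing ↥D] (T : Subring K) (hDT : D ≤ T) (hflat : SubringFlat D T hDT) :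
    intMul D T = intPoly T := by
  apply le_antisymm
  · intro p hp
    rw [mem_intMul] at hp
    show ∀ t ∈ T, p.eval t ∈ T
    induction hp using Submodule.span_induction with
    | mem x hx => exact fun t ht => s6_stepA hDT hflat hx ht
    | zero =>
      intro t ht
      simpa using T.zero_mem
    | add y z _ _ hy hz =>
      intro t ht
      simpa [Polynomial.eval_add] using T.add_mem (hy t ht) (hz t ht)
    | smul r y _ hy =>
      intro t ht
      rw [smul_poly_eq_C_mul, Polynomial.eval_mul, Polynomial.eval_C]
      exact T.mul_mem r.2 (hy t ht)
  · intro p hp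
    exact s6_stepB hDT hflat hp
end

section
/- Let D be an integral domain with quotient field K that is one-dimensional (Krull dimension 1) and locally finite (every nonzero element of D belongs to only finitely many maximal ideals of D), and let T be a flat overring of D. Then Int(D)T = Int(T). -/
open Polynomial

section Proof7F
universe u
variable {K : Type u} [Field K]

set_option maxHeartbeats 1000000 in
lemma flat_exists_aux {D T : Subring K} [IsFractionRing ↥D K] (hDT : D ≤ T)
    [Algebra ↥D ↥T] [Module.Flat ↥D ↥T]
    (halg : ∀ d : ↥D, ((algebraMap ↥D ↥T d : ↥T) : K) = (d : K)) (t : ↥T) :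
    ∃ (κ : Type u) (_ : Fintype κ) (d : κ → ↥D) (y : κ → ↥T),
      (∀ j, (d j : K) * (t : K) ∈ D) ∧ (∑ j, (d j : K) * (y j : K)) = 1 := by
  obtain ⟨⟨a, s⟩, hs⟩ := IsLocalization.surj (nonZeroDivisors ↥D) (t : K)
  have hs' : (t : K) * ((s : ↥D) : K) = ((a : ↥D) : K) := hs
  have hsne : ((s : ↥D) : K) ≠ 0 := by
    simpa using (nonZeroDivisors.coe_ne_zero s)
  set f : ULift.{u} (Fin 2) → ↥D := fun i => ![(s : ↥D), -a] i.down with hf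
  set x : ULift.{u} (Fin 2) → ↥T := fun i => ![t, 1] i.down with hx
  have hsmul : ∀ (d : ↥D) (z : ↥T), ((d • z : ↥T) : K) = (d : K) * (z : K) := by
    intro d z
    rw [Algebra.smul_def, ← halg d]
    rfl
  have hf0 : f (ULift.up 0) = (s : ↥D) := rfl
  have hf1 : f (ULift.up 1) = -a := rfl
  have hx0 : x (ULift.up 0) = t := rfl
  have hx1 : x (ULift.up 1) = 1 := rfl
  have hrel : ∑ i, f i • x i = 0 := by
    have h' : ∑ i : Fin 2, f (ULift.up i) • x (ULift.up i) = ∑ i, f i • x i :=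
      Equiv.sum_comp (Equiv.ulift.symm) (fun i => f i • x i)
    rw [← h', Fin.sum_univ_two, hf0, hf1, hx0, hx1]
    apply Subtype.ext
    push_cast [hsmul]
    linear_combination hs'
  have hTR := Module.Flat.isTrivialRelation_of_sum_smul_eq_zero (R := ↥D) (M := ↥T) hrel
  obtain ⟨κ, A, y, hxy, hfA⟩ := hTR
  have hd : ∀ j, ((A (ULift.up 1) j : ↥D) : K) * (t : K) ∈ D := by
    intro j
    have h0 := hfA j
    have hcomp := Fintype.sum_equiv (Equiv.ulift (α := Fin 2))
      (fun i : ULift.{u} (Fin 2) => f i * A i j)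
      (fun i : Fin 2 => f (ULift.up i) * A (ULift.up i) j) (fun i => rfl)
    have h0' : ∑ i : Fin 2, f (ULift.up i) * A (ULift.up i) j = 0 := by
      rw [← hcomp]; exact h0
    rw [Fin.sum_univ_two, hf0, hf1] at h0'
    have hK : ((s:↥D):K) * (A (ULift.up 0) j : K) = ((a:↥D):K) * (A (ULift.up 1) j : K) := by
      have h3 := congrArg (fun z : ↥D => (z : K)) h0'
      push_cast at h3
      linear_combination h3
    have h4 : ((A (ULift.up 1) j : K) * (t:K)) * ((s:↥D):K)
        = (A (ULift.up 0) j : K) * ((s:↥D):K) := by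
      linear_combination (A (ULift.up 1) j : K) * hs' - hK
    have h2 := mul_right_cancel₀ hsne h4
    rw [h2]
    exact (A (ULift.up 0) j).2
  have hsum : (∑ j, ((A (ULift.up 1) j : ↥D) : K) * ((y j : ↥T) : K)) = 1 := by
    have h1 := hxy (ULift.up 1)
    rw [hx1] at h1
    have h5 := congrArg (fun z : ↥T => (z : K)) h1
    simp only [OneMemClass.coe_one] at h5
    rw [show ((∑ j, A (ULift.up 1) j • y j : ↥T) : K) = ∑ j, (A (ULift.up 1) j : K) * (y j : K) by
      push_cast [hsmul]; rfl] at h5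
    exact h5.symm
  exact ⟨ULift.{u} (Fin κ), inferInstance, fun j => A (ULift.up 1) j.down, fun j => y j.down,
    fun j => hd j.down,
    (Equiv.ulift.sum_comp (fun j : Fin κ => ((A (ULift.up 1) j : ↥D) : K) * ((y j : ↥T) : K))).trans hsum⟩


lemma flat_exists {D T : Subring K} [IsFractionRing ↥D K] (hDT : D ≤ T)
    (hflat : SubringFlat D T hDT) (t : ↥T) :
    ∃ (κ : Type u) (_ : Fintype κ) (d : κ → ↥D) (y : κ → ↥T),
      (∀ j, (d j : K) * (t : K) ∈ D) ∧ (∑ j, (d j : K) * (y j : K)) = 1 := by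
  letI : Algebra ↥D ↥T := (Subring.inclusion hDT).toAlgebra
  haveI : Module.Flat ↥D ↥T := hflat
  exact flat_exists_aux hDT (fun d => rfl) t

end Proof7F
section Proof7
universe u
variable {K : Type u} [Field K]

lemma s7_maximal_of_prime {D : Subring K} (hdim : ringKrullDim ↥D = 1)
    {P : Ideal ↥D} (hP : P.IsPrime) (hne : P ≠ ⊥) : P.IsMaximal := by
  by_contra hmax
  obtain ⟨M, hM, hPM⟩ := P.exists_le_maximal hP.ne_top
  have hlt : P < M := lt_of_le_of_ne hPM (fun h => hmax (h ▸ hM))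
  let p : LTSeries (PrimeSpectrum ↥D) :=
    ⟨2, ![⟨⊥, Ideal.bot_prime⟩, ⟨P, hP⟩, ⟨M, hM.isPrime⟩], by
      intro i
      fin_cases i
      · exact bot_lt_iff_ne_bot.mpr (by simpa [PrimeSpectrum.ext_iff] using hne)
      · exact hlt⟩
  have h2 := Order.LTSeries.length_le_krullDim p
  rw [show p.length = 2 from rfl] at h2
  rw [ringKrullDim] at hdim
  rw [hdim] at h2
  norm_num at h2

lemma s7_mem_locAt {D : Subring K} {M : Ideal ↥D} [M.IsPrime] {x : K} :
    x ∈ locAt D M ↔ ∃ d s : ↥D, s ∉ M ∧ (s : K) * x = (d : K) := Iff.rfl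

/-- Every element of `K` lying in all localizations at maximal ideals lies in `D`. -/
lemma s7_interAll {D : Subring K} {x : K}
    (h : ∀ M : Ideal ↥D, (hM : M.IsMaximal) → x ∈ @locAt K _ D M hM.isPrime) : x ∈ D := by
  let I : Ideal ↥D :=
    { carrier := {d : ↥D | (d : K) * x ∈ D}
      zero_mem' := by
        show ((0 : ↥D) : K) * x ∈ D
        simpa using zero_mem D
      add_mem' := fun {a b} ha hb => by
        have h2 := add_mem (show (a : K) * x ∈ D from ha) (show (b : K) * x ∈ D from hb)
        show ((a + b : ↥D) : K) * x ∈ D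
        push_cast
        rw [add_mul]
        exact h2
      smul_mem' := fun r d hd => by
        have h2 := mul_mem r.2 (show (d : K) * x ∈ D from hd)
        show ((r • d : ↥D) : K) * x ∈ D
        rw [smul_eq_mul]
        push_cast
        rw [mul_assoc]
        exact h2 }
  by_cases hI : I = ⊤
  · have h1 : (1 : ↥D) ∈ I := hI ▸ Submodule.mem_top
    simpa [I] using h1
  · obtain ⟨M, hM, hIM⟩ := I.exists_le_maximal hI
    haveI := hM.isPrime
    obtain ⟨d, s, hs, hsx⟩ := s7_mem_locAt.mp (h M hM)
    exact absurd (hIM (show s ∈ I by simp [I, hsx, d.2])) hs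

/-- The contraction to `D` of the ideal `e·D_M` of the localization. -/
def s7_contrId {D : Subring K} (M : Ideal ↥D) (hM : M.IsPrime) (e : ↥D) : Ideal ↥D where
  carrier := {d : ↥D | ∃ s v : ↥D, s ∉ M ∧ s * d = e * v}
  zero_mem' := ⟨1, 0, (Ideal.ne_top_iff_one M).mp hM.ne_top, by ring⟩
  add_mem' := by
    rintro a b ⟨s, v, hs, hsv⟩ ⟨s', v', hs', hsv'⟩
    refine ⟨s * s', s' * v + s * v', fun h => ?_, by ring_nf; linear_combination s' * hsv + s * hsv'⟩
    rcases hM.mem_or_mem h with h | h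
    exacts [hs h, hs' h]
  smul_mem' := by
    rintro r d ⟨s, v, hs, hsv⟩
    exact ⟨s, r * v, hs, by rw [smul_eq_mul]; linear_combination r * hsv⟩

/-- In a 1-dimensional domain, a power of any element of a maximal ideal `M`
lands in `e·D_M` for any nonzero `e`. -/
lemma s7_pow_mem_contrId {D : Subring K} (hdim : ringKrullDim ↥D = 1)
    {M : Ideal ↥D} (hM : M.IsMaximal) {e u : ↥D} (he : e ≠ 0) (hu : u ∈ M) :
    ∃ k : ℕ, u ^ k ∈ s7_contrId M hM.isPrime e := by
  by_contra hcon
  push_neg at hcon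
  -- the submonoid of elements s * u^k with s ∉ M
  let S : Submonoid ↥D :=
    { carrier := {x : ↥D | ∃ (s : ↥D) (k : ℕ), s ∉ M ∧ x = s * u ^ k}
      one_mem' := ⟨1, 0, (Ideal.ne_top_iff_one M).mp hM.isPrime.ne_top, by ring⟩
      mul_mem' := by
        rintro x y ⟨s, k, hs, rfl⟩ ⟨s', k', hs', rfl⟩
        refine ⟨s * s', k + k', fun h => ?_, by ring⟩
        rcases hM.isPrime.mem_or_mem h with h | h
        exacts [hs h, hs' h] }
  have hdisj : Disjoint ((Ideal.span {e} : Ideal ↥D) : Set ↥D) (S : Set ↥D) := by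
    rw [Set.disjoint_left]
    rintro x hx ⟨s, k, hs, rfl⟩
    obtain ⟨v, hv⟩ := Ideal.mem_span_singleton'.mp hx
    exact hcon k ⟨s, v, hs, by linear_combination hv.symm⟩
  obtain ⟨P, hP, hle, hPdisj⟩ := (Ideal.span {e}).exists_le_prime_disjoint S hdisj
  have hPne : P ≠ ⊥ := fun h => by
    have : e ∈ P := hle (Ideal.subset_span rfl)
    rw [h] at this
    exact he (by simpa using this)
  have hPM : P ≤ M := by
    intro x hx
    by_contra hxM
    exact (Set.disjoint_left.mp hPdisj hx) ⟨x, 0, hxM, by ring⟩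
  have hPmax := s7_maximal_of_prime hdim hP hPne
  have hPeq : P = M := hPmax.eq_of_le hM.ne_top hPM
  have huS : u ∈ S := ⟨1, 1, (Ideal.ne_top_iff_one M).mp hM.isPrime.ne_top, by ring⟩
  exact (Set.disjoint_left.mp hPdisj (hPeq ▸ hu)) huS

lemma s7_contrId_not_le {D : Subring K} (hdim : ringKrullDim ↥D = 1)
    {M N : Ideal ↥D} (hM : M.IsMaximal) (hN : N.IsMaximal) (hne : N ≠ M)
    {e : ↥D} (he : e ≠ 0) : ¬ s7_contrId N hN.isPrime e ≤ M := by
  intro hle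
  have hnle : ¬ N ≤ M := fun h => hne (hN.eq_of_le hM.ne_top h)
  obtain ⟨u, huN, huM⟩ := SetLike.not_le_iff_exists.mp hnle
  obtain ⟨k, hk⟩ := s7_pow_mem_contrId hdim hN he huN
  exact huM (hM.isPrime.mem_of_pow_mem k (hle hk))

end Proof7
section Proof7B
universe u
variable {K : Type u} [Field K]

/-- Choose `d ∉ M` lying in `contrId N e` for all `N` in a finite set of maximal
ideals different from `M`. -/
lemma s7_exists_avoid {D : Subring K} (hdim : ringKrullDim ↥D = 1)
    {M : Ideal ↥D} (hM : M.IsMaximal) {e : ↥D} (he : e ≠ 0)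
    (F : Finset (Ideal ↥D)) :
    (∀ N ∈ F, N.IsMaximal ∧ N ≠ M) →
    ∃ d : ↥D, d ∉ M ∧ ∀ N ∈ F, ∀ (hN : N.IsPrime), d ∈ s7_contrId N hN e := by
  classical
  induction F using Finset.induction with
  | empty =>
    intro _
    exact ⟨1, (Ideal.ne_top_iff_one M).mp hM.isPrime.ne_top, fun N hN => absurd hN (by simp)⟩
  | @insert N F hnm ih =>
    intro hF
    obtain ⟨hNmax, hNne⟩ := hF N (Finset.mem_insert_self N F)
    obtain ⟨d', hd'M, hd'⟩ := ih (fun N' hN' => hF N' (Finset.mem_insert_of_mem hN'))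
    obtain ⟨u, huC, huM⟩ :=
      SetLike.not_le_iff_exists.mp (s7_contrId_not_le hdim hM hNmax hNne he)
    refine ⟨u * d', fun h => ?_, fun N' hN' hp => ?_⟩
    · rcases hM.isPrime.mem_or_mem h with h | h
      exacts [huM h, hd'M h]
    · rcases Finset.mem_insert.mp hN' with rfl | h
      · exact Ideal.mul_mem_right d' _ huC
      · exact Ideal.mul_mem_left _ u (hd' N' h hp)

/-- Clearing denominators of a polynomial's coefficients. -/
lemma s7_exists_coeff_den {D : Subring K} [IsFractionRing ↥D K] (f : Polynomial K) :
    ∃ b : ↥D, b ≠ 0 ∧ ∀ i, (b : K) * f.coeff i ∈ D := by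
  obtain ⟨b, hb⟩ :=
    IsLocalization.exist_integer_multiples (nonZeroDivisors ↥D) f.support f.coeff
  refine ⟨(b : ↥D), nonZeroDivisors.coe_ne_zero b, fun i => ?_⟩
  by_cases hi : i ∈ f.support
  · obtain ⟨c, hc⟩ := hb i hi
    rw [show ((b : ↥D) : K) * f.coeff i = (b : ↥D) • f.coeff i from rfl, ← hc]
    exact c.2
  · rw [Polynomial.notMem_support_iff.mp hi, mul_zero]
    exact zero_mem D

/-- Evaluation denominator bound: `b * s^n * f(x) ∈ D` whenever `s * x ∈ D` etc. -/
lemma s7_eval_den {D : Subring K} {f : Polynomial K} {b : ↥D}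
    (hb : ∀ i, (b : K) * f.coeff i ∈ D) {s a : ↥D} {x : K}
    (hx : (s : K) * x = (a : K)) :
    (b : K) * (s : K) ^ f.natDegree * f.eval x ∈ D := by
  rw [Polynomial.eval_eq_sum_range, Finset.mul_sum]
  refine sum_mem fun i hi => ?_
  have hin : i ≤ f.natDegree := Nat.lt_succ_iff.mp (Finset.mem_range.mp hi)
  have hxi : (s : K) ^ i * x ^ i = (a : K) ^ i := by
    rw [← mul_pow, hx]
  have key : (b : K) * (s : K) ^ f.natDegree * (f.coeff i * x ^ i)
      = ((b : K) * f.coeff i) * ((s : K) ^ (f.natDegree - i) * (a : K) ^ i) := by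
    rw [← hxi]
    have : (s : K) ^ (f.natDegree - i) * (s : K) ^ i = (s : K) ^ f.natDegree :=
      pow_sub_mul_pow (s : K) hin
    linear_combination ((b:K) * f.coeff i * x ^ i) * this.symm
  rw [key]
  exact mul_mem (hb i) (mul_mem (pow_mem (SetLike.coe_mem s) _) (pow_mem (SetLike.coe_mem a) _))

end Proof7B
section Proof7C
universe u
variable {K : Type u} [Field K]

/-- Approximation: given `s ∉ M` and any `a`, there exist `c`, `d ∉ M` and `v`
with `d * (a - c*s) = e * v`. -/
lemma s7_approx {D : Subring K} (hdim : ringKrullDim ↥D = 1)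
    (hlf : ∀ x : ↥D, x ≠ 0 → {M : Ideal ↥D | M.IsMaximal ∧ x ∈ M}.Finite)
    {M : Ideal ↥D} (hM : M.IsMaximal) {e : ↥D} (he : e ≠ 0)
    {s : ↥D} (hsM : s ∉ M) (a : ↥D) :
    ∃ c d v : ↥D, d ∉ M ∧ d * (a - c * s) = e * v := by
  classical
  have heK : (e : K) ≠ 0 := fun h => he (by exact_mod_cast h)
  set F : Finset (Ideal ↥D) := ((hlf e he).toFinset).erase M with hFdef
  have hF : ∀ N ∈ F, N.IsMaximal ∧ N ≠ M := by
    intro N hN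
    rw [hFdef, Finset.mem_erase, Set.Finite.mem_toFinset] at hN
    exact ⟨hN.2.1, hN.1⟩
  obtain ⟨d, hdM, hd⟩ := s7_exists_avoid hdim hM he F hF
  -- solve the congruence at M
  have htop : s7_contrId M hM.isPrime e ⊔ Ideal.span {s} = ⊤ := by
    by_contra hne
    obtain ⟨N'', hN'', hle⟩ := Ideal.exists_le_maximal _ hne
    have hCle : s7_contrId M hM.isPrime e ≤ N'' := le_trans le_sup_left hle
    have hNM : N'' = M := by
      by_contra hnm
      exact s7_contrId_not_le hdim hN'' hM (fun h => hnm h.symm) he hCle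
    exact hsM (hNM ▸ hle ((le_sup_right : Ideal.span {s} ≤ _) (Ideal.subset_span rfl)))
  obtain ⟨q, hq, y, hy, hqy⟩ :=
    Submodule.mem_sup.mp (htop ▸ (Submodule.mem_top : (1 : ↥D) ∈ ⊤))
  obtain ⟨c0, hc0⟩ := Ideal.mem_span_singleton'.mp hy
  set c : ↥D := c0 * a with hcdef
  set w : ↥D := a - c * s with hwdef
  have hwC : w ∈ s7_contrId M hM.isPrime e := by
    have : w = a * q := by
      rw [hwdef, hcdef]
      linear_combination (-a) * hqy - a * hc0
    rw [this]
    exact Ideal.mul_mem_left _ a hq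
  obtain ⟨s₀, v₀, hs₀, hsv₀⟩ := hwC
  -- globalize
  set x : K := (d : K) * (w : K) / (e : K) with hxdef
  have hxD : x ∈ D := by
    apply s7_interAll (D := D)
    intro N' hN'
    haveI := hN'.isPrime
    by_cases heN : e ∈ N'
    · by_cases hNM : N' = M
      · subst hNM
        refine s7_mem_locAt.mpr ⟨d * v₀, s₀, hs₀, ?_⟩
        rw [hxdef]
        field_simp
        have := congrArg (fun z : ↥D => (z : K)) hsv₀
        push_cast at this
        push_cast
        linear_combination (d : K) * this
      · have hNF : N' ∈ F := by
          rw [hFdef, Finset.mem_erase, Set.Finite.mem_toFinset]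
          exact ⟨hNM, hN', heN⟩
        obtain ⟨s', v', hs', hsv'⟩ := hd N' hNF hN'.isPrime
        refine s7_mem_locAt.mpr ⟨v' * w, s', hs', ?_⟩
        rw [hxdef]
        field_simp
        have := congrArg (fun z : ↥D => (z : K)) hsv'
        push_cast at this
        push_cast
        linear_combination (w : K) * this
    · refine s7_mem_locAt.mpr ⟨d * w, e, heN, ?_⟩
      rw [hxdef]
      field_simp
      norm_cast
    
  refine ⟨c, d, ⟨x, hxD⟩, hdM, ?_⟩
  apply Subtype.ext
  push_cast
  rw [hxdef]
  field_simp
  rw [hwdef]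
  push_cast
  ring

end Proof7C
section Proof7D
universe u
variable {K : Type u} [Field K]

/-- Chabert-type lemma: pointwise boundedness at `M` gives a uniform denominator
avoiding `M`. -/
lemma s7_lemC {D : Subring K} (hdim : ringKrullDim ↥D = 1)
    (hlf : ∀ x : ↥D, x ≠ 0 → {M : Ideal ↥D | M.IsMaximal ∧ x ∈ M}.Finite)
    {M : Ideal ↥D} (hM : M.IsMaximal) {f : Polynomial K} {b : ↥D} (hbne : b ≠ 0)
    (hb : ∀ c ∈ D, (b : K) * f.eval c ∈ D)
    (hfM : ∀ c ∈ D, f.eval c ∈ @locAt K _ D M hM.isPrime) :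
    ∃ d : ↥D, d ∉ M ∧ ∀ c ∈ D, (d : K) * f.eval c ∈ D := by
  classical
  set F : Finset (Ideal ↥D) := ((hlf b hbne).toFinset).erase M with hFdef
  have hF : ∀ N ∈ F, N.IsMaximal ∧ N ≠ M := by
    intro N hN
    rw [hFdef, Finset.mem_erase, Set.Finite.mem_toFinset] at hN
    exact ⟨hN.2.1, hN.1⟩
  obtain ⟨d, hdM, hd⟩ := s7_exists_avoid hdim hM hbne F hF
  refine ⟨d, hdM, fun c hc => ?_⟩
  apply s7_interAll (D := D)
  intro N' hN'
  haveI := hN'.isPrime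
  by_cases hbN : b ∈ N'
  · by_cases hNM : N' = M
    · subst hNM
      obtain ⟨d0, s0, hs0, h0⟩ := s7_mem_locAt.mp (hfM c hc)
      refine s7_mem_locAt.mpr ⟨d * d0, s0, hs0, ?_⟩
      push_cast
      linear_combination (d : K) * h0
    · have hNF : N' ∈ F := by
        rw [hFdef, Finset.mem_erase, Set.Finite.mem_toFinset]
        exact ⟨hNM, hN', hbN⟩
      obtain ⟨s', v', hs', hsv'⟩ := hd N' hNF hN'.isPrime
      have hco := congrArg (fun z : ↥D => (z : K)) hsv'
      push_cast at hco
      refine s7_mem_locAt.mpr ⟨v' * ⟨(b : K) * f.eval c, hb c hc⟩, s', hs', ?_⟩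
      push_cast
      linear_combination (f.eval c) * hco
  · refine s7_mem_locAt.mpr ⟨d * ⟨(b : K) * f.eval c, hb c hc⟩, b, hbN, ?_⟩
    push_cast
    ring

/-- Int-valued polynomials take values in `D_M` on `D_M`, with an explicit
denominator avoiding `M`. -/
lemma s7_eval_locAt {D : Subring K} [IsFractionRing ↥D K] (hdim : ringKrullDim ↥D = 1)
    (hlf : ∀ x : ↥D, x ≠ 0 → {M : Ideal ↥D | M.IsMaximal ∧ x ∈ M}.Finite)
    {M : Ideal ↥D} (hM : M.IsMaximal) {f : Polynomial K}
    (hf : ∀ c ∈ D, f.eval c ∈ D) {s a : ↥D} (hsM : s ∉ M) {x : K}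
    (hx : (s : K) * x = (a : K)) :
    ∃ d : ↥D, d ∉ M ∧ (d : K) * f.eval x ∈ D := by
  classical
  obtain ⟨b, hbne, hb⟩ := s7_exists_coeff_den (D := D) f
  set n : ℕ := f.natDegree with hndef
  have hsne : s ≠ 0 := fun h => hsM (h ▸ M.zero_mem)
  have hsK : (s : K) ≠ 0 := fun h => hsne (by exact_mod_cast h)
  have hbK : (b : K) ≠ 0 := fun h => hbne (by exact_mod_cast h)
  set e : ↥D := s ^ (n + 1) * b with hedef
  have hene : e ≠ 0 := mul_ne_zero (pow_ne_zero _ hsne) hbne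
  obtain ⟨c, d, v, hdM, hdv⟩ := s7_approx hdim hlf hM hene hsM a
  set H : K := ∑ i ∈ Finset.range (n + 1),
    f.coeff i * (∑ j ∈ Finset.range i, x ^ j * (c : K) ^ (i - 1 - j)) with hHdef
  have hdiff : f.eval x - f.eval (c : K) = (x - (c : K)) * H := by
    rw [Polynomial.eval_eq_sum_range (p := f) x, Polynomial.eval_eq_sum_range (p := f) (c : K),
      ← Finset.sum_sub_distrib, hHdef, Finset.mul_sum]
    refine Finset.sum_congr rfl fun i _ => ?_
    have hgeo := geom_sum₂_mul x (c : K) i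
    linear_combination (-(f.coeff i)) * hgeo
  have hH : (b : K) * (s : K) ^ n * H ∈ D := by
    rw [hHdef, Finset.mul_sum]
    refine sum_mem fun i hi => ?_
    have hin : i ≤ n := Nat.lt_succ_iff.mp (Finset.mem_range.mp hi)
    have expand : (b : K) * (s : K) ^ n *
        (f.coeff i * (∑ j ∈ Finset.range i, x ^ j * (c : K) ^ (i - 1 - j)))
        = ∑ j ∈ Finset.range i,
            ((b : K) * f.coeff i) * (((s : K) ^ (n - j) * (a : K) ^ j) * (c : K) ^ (i - 1 - j)) := by
      rw [Finset.mul_sum, Finset.mul_sum]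
      refine Finset.sum_congr rfl fun j hj => ?_
      have hjn : j ≤ n := le_trans (Nat.le_of_lt_succ (Nat.lt_succ_of_lt (Finset.mem_range.mp hj))) hin
      have hxj : (s : K) ^ j * x ^ j = (a : K) ^ j := by rw [← mul_pow, hx]
      have hsplit : (s : K) ^ (n - j) * (s : K) ^ j = (s : K) ^ n :=
        pow_sub_mul_pow (s : K) hjn
      have key : (s : K) ^ n * x ^ j = (s : K) ^ (n - j) * (a : K) ^ j := by
        rw [← hxj, ← mul_assoc, hsplit]
      linear_combination ((b : K) * f.coeff i * (c : K) ^ (i - 1 - j)) * key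
    rw [expand]
    refine sum_mem fun j _ => ?_
    exact mul_mem (hb i) (mul_mem (mul_mem (pow_mem (SetLike.coe_mem s) _)
      (pow_mem (SetLike.coe_mem a) _)) (pow_mem (SetLike.coe_mem c) _))
  have hco := congrArg (fun z : ↥D => (z : K)) hdv
  push_cast [hedef] at hco
  -- hco : d * (a - c * s) = s^(n+1) * b * v
  have hxc : (s : K) * (x - (c : K)) = (a : K) - (c : K) * (s : K) := by
    linear_combination hx
  have h2 : (d : K) * (x - (c : K)) = (s : K) ^ n * (b : K) * (v : K) := by
    apply mul_right_cancel₀ hsK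
    calc (d : K) * (x - (c : K)) * (s : K)
        = (d : K) * ((s : K) * (x - (c : K))) := by ring
      _ = (d : K) * ((a : K) - (c : K) * (s : K)) := by rw [hxc]
      _ = (s : K) ^ n * (b : K) * (v : K) * (s : K) := by
          rw [hco]; ring
  have key2 : (d : K) * f.eval x
      = (v : K) * ((b : K) * (s : K) ^ n * H) + (d : K) * f.eval (c : K) := by
    linear_combination (d : K) * hdiff + H * h2
  refine ⟨d, hdM, ?_⟩
  rw [key2]
  exact add_mem (mul_mem (SetLike.coe_mem v) hH) (mul_mem (SetLike.coe_mem d) (hf _ (SetLike.coe_mem c)))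

end Proof7D

section Proof7E
universe u
variable {K : Type u} [Field K]

/-- `JT = T` for an ideal `J` of `D`. -/
def s7_spanTop {D T : Subring K} (hDT : D ≤ T) (J : Ideal ↥D) : Prop :=
  Ideal.span ((Subring.inclusion hDT) '' (J : Set ↥D)) = ⊤

lemma s7_spanTop_of_forall {D T : Subring K} (hDT : D ≤ T) (hdim : ringKrullDim ↥D = 1)
    {J : Ideal ↥D} (hJ : J ≠ ⊥)
    (h : ∀ M : Ideal ↥D, (hM : M.IsMaximal) → ¬ s7_spanTop hDT M → ¬ J ≤ M) :
    s7_spanTop hDT J := by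
  by_contra hcon
  obtain ⟨N, hN, hle⟩ := Ideal.exists_le_maximal _ hcon
  set M : Ideal ↥D := N.comap (Subring.inclusion hDT) with hMdef
  haveI : M.IsPrime := hN.isPrime.comap _
  have hJM : J ≤ M := fun j hj => hle (Ideal.subset_span ⟨j, hj, rfl⟩)
  have hMne : M ≠ ⊥ := by
    obtain ⟨j, hjJ, hjne⟩ := Submodule.exists_mem_ne_zero_of_ne_bot hJ
    intro h0
    have : j ∈ (⊥ : Ideal ↥D) := h0 ▸ hJM hjJ
    exact hjne (by simpa using this)
  have hMmax := s7_maximal_of_prime hdim inferInstance hMne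
  refine h M hMmax ?_ hJM
  intro htop
  have hsub : Ideal.span ((Subring.inclusion hDT) '' (M : Set ↥D)) ≤ N := by
    rw [Ideal.span_le]
    rintro _ ⟨m, hm, rfl⟩
    exact hm
  rw [htop] at hsub
  exact hN.ne_top (top_le_iff.mp hsub)

lemma s7_flat_le_locAt {D T : Subring K} [IsFractionRing ↥D K] (hDT : D ≤ T)
    (hflat : SubringFlat D T hDT) {M : Ideal ↥D} (hM : M.IsMaximal)
    (hMT : ¬ s7_spanTop hDT M) : ∀ x ∈ T, x ∈ @locAt K _ D M hM.isPrime := by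
  intro x hx
  obtain ⟨κ, hκ, d, y, hdx, hsum⟩ := flat_exists hDT hflat ⟨x, hx⟩
  letI := hκ
  by_cases hall : ∀ j, d j ∈ M
  · exfalso
    apply hMT
    have h1 : (∑ j, (Subring.inclusion hDT) (d j) * y j : ↥T) = 1 := by
      apply Subtype.ext
      push_cast
      exact (Finset.sum_congr rfl fun j _ => rfl).trans hsum
    show Ideal.span _ = ⊤
    rw [Ideal.eq_top_iff_one, ← h1]
    exact sum_mem fun j _ =>
      Ideal.mul_mem_right _ _ (Ideal.subset_span ⟨d j, hall j, rfl⟩)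
  · push_neg at hall
    obtain ⟨j, hj⟩ := hall
    exact s7_mem_locAt.mpr ⟨⟨(d j : K) * x, hdx j⟩, d j, hj, rfl⟩

/-- The ideal of denominators for `f(t)` relative to `T`. -/
def s7_evalIdeal (D T : Subring K) (hDT : D ≤ T) (f : Polynomial K) (t : K) : Ideal ↥D where
  carrier := {d : ↥D | (d : K) * f.eval t ∈ T}
  zero_mem' := by
    show ((0 : ↥D) : K) * f.eval t ∈ T
    simpa using zero_mem T
  add_mem' := fun {a b} ha hb => by
    have h2 := add_mem (show (a : K) * f.eval t ∈ T from ha) (show (b : K) * f.eval t ∈ T from hb)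
    show ((a + b : ↥D) : K) * f.eval t ∈ T
    push_cast
    rw [add_mul]
    exact h2
  smul_mem' := fun r d hd => by
    have h2 := mul_mem (hDT r.2) (show (d : K) * f.eval t ∈ T from hd)
    show ((r • d : ↥D) : K) * f.eval t ∈ T
    rw [smul_eq_mul]
    push_cast
    rw [mul_assoc]
    exact h2

lemma s7_goal1 {D T : Subring K} [IsFractionRing ↥D K] (hdim : ringKrullDim ↥D = 1)
    (hlf : ∀ x : ↥D, x ≠ 0 → {M : Ideal ↥D | M.IsMaximal ∧ x ∈ M}.Finite)
    (hDT : D ≤ T) (hflat : SubringFlat D T hDT)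
    {f : Polynomial K} (hf : ∀ c ∈ D, f.eval c ∈ D) {t : K} (ht : t ∈ T) :
    f.eval t ∈ T := by
  classical
  obtain ⟨b, hbne, hb⟩ := s7_exists_coeff_den (D := D) f
  obtain ⟨⟨a0, s0⟩, hs0⟩ := IsLocalization.surj (nonZeroDivisors ↥D) t
  have hs0' : ((s0 : ↥D) : K) * t = (a0 : K) := by
    rw [mul_comm]; exact hs0
  set J : Ideal ↥D := s7_evalIdeal D T hDT f t with hJdef
  have hd0 : b * (s0 : ↥D) ^ f.natDegree ∈ J := by
    show ((b * (s0 : ↥D) ^ f.natDegree : ↥D) : K) * f.eval t ∈ T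
    have := s7_eval_den (D := D) (f := f) (b := b) hb (s := (s0 : ↥D)) (a := a0) hs0'
    push_cast
    push_cast at this
    exact hDT (by rw [mul_assoc]; rw [mul_assoc] at this; exact this)
  have hJne : J ≠ ⊥ := by
    intro h0
    rw [h0] at hd0
    have hz : b * (s0 : ↥D) ^ f.natDegree = (0 : ↥D) := by simpa using hd0
    exact mul_ne_zero hbne (pow_ne_zero _ (nonZeroDivisors.coe_ne_zero s0)) hz
  have hcov : ∀ M : Ideal ↥D, (hM : M.IsMaximal) → ¬ s7_spanTop hDT M → ¬ J ≤ M := by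
    intro M hM hMT hle
    have hTloc := s7_flat_le_locAt hDT hflat hM hMT
    obtain ⟨aa, ss, hss, hsst⟩ := s7_mem_locAt.mp (hTloc t ht)
    obtain ⟨d, hdM, hdmem⟩ := s7_eval_locAt hdim hlf hM hf hss hsst
    exact hdM (hle (show d ∈ J from hDT hdmem))
  have hspan := s7_spanTop_of_forall hDT hdim hJne hcov
  obtain ⟨cf, hsupp, hsum⟩ := Submodule.mem_span_set.mp ((Ideal.eq_top_iff_one _).mp hspan)
  have hcoe : ∑ m ∈ cf.support, (cf m : K) * (m : K) = 1 := by
    have h := congrArg (fun z : ↥T => (z : K)) hsum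
    simp only [Finsupp.sum, smul_eq_mul] at h
    push_cast at h
    exact h
  have hrw : f.eval t = ∑ m ∈ cf.support, (cf m : K) * ((m : K) * f.eval t) := by
    rw [show ∑ m ∈ cf.support, (cf m : K) * ((m : K) * f.eval t)
        = (∑ m ∈ cf.support, (cf m : K) * (m : K)) * f.eval t by
      rw [Finset.sum_mul]; exact Finset.sum_congr rfl fun m _ => by ring]
    rw [hcoe, one_mul]
  rw [hrw]
  refine sum_mem fun m hm => ?_
  obtain ⟨dm, hdmJ, rfl⟩ := hsupp hm
  exact mul_mem (SetLike.coe_mem (cf _)) (show ((dm : ↥D) : K) * f.eval t ∈ T from hdmJ)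

lemma s7_goal2 {D T : Subring K} [IsFractionRing ↥D K] (hdim : ringKrullDim ↥D = 1)
    (hlf : ∀ x : ↥D, x ≠ 0 → {M : Ideal ↥D | M.IsMaximal ∧ x ∈ M}.Finite)
    (hDT : D ≤ T) (hflat : SubringFlat D T hDT)
    {f : Polynomial K} (hf : ∀ t ∈ T, f.eval t ∈ T) : f ∈ intMul D T := by
  classical
  set J : Ideal ↥D := condIdeal D f with hJdef
  obtain ⟨b, hbne, hb⟩ := s7_exists_coeff_den (D := D) f
  have hbJ : b ∈ J := by
    intro c hc
    have := s7_eval_den (D := D) (f := f) (b := b) hb (s := 1) (a := ⟨c, hc⟩) (x := c)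
      (by simp)
    simpa using this
  have hJne : J ≠ ⊥ := by
    intro h0
    rw [h0] at hbJ
    exact hbne (by simpa using hbJ)
  have hcov : ∀ M : Ideal ↥D, (hM : M.IsMaximal) → ¬ s7_spanTop hDT M → ¬ J ≤ M := by
    intro M hM hMT hle
    have hTloc := s7_flat_le_locAt hDT hflat hM hMT
    have hfM : ∀ c ∈ D, f.eval c ∈ @locAt K _ D M hM.isPrime := fun c hc =>
      hTloc _ (hf c (hDT hc))
    obtain ⟨d, hdM, hdmem⟩ := s7_lemC hdim hlf hM hbne (fun c hc => hbJ c hc) hfM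
    exact hdM (hle (show d ∈ J from hdmem))
  have hspan := s7_spanTop_of_forall hDT hdim hJne hcov
  obtain ⟨cf, hsupp, hsum⟩ := Submodule.mem_span_set.mp ((Ideal.eq_top_iff_one _).mp hspan)
  have hcoe : ∑ m ∈ cf.support, (cf m : K) * (m : K) = 1 := by
    have h := congrArg (fun z : ↥T => (z : K)) hsum
    simp only [Finsupp.sum, smul_eq_mul] at h
    push_cast at h
    exact h
  have hrep : f = ∑ m ∈ cf.support, (cf m) • (Polynomial.C (m : K) * f) := by
    calc f = Polynomial.C (1 : K) * f := by simp
    _ = Polynomial.C (∑ m ∈ cf.support, (cf m : K) * (m : K)) * f := by rw [hcoe]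
    _ = (∑ m ∈ cf.support, Polynomial.C ((cf m : K) * (m : K))) * f := by rw [map_sum]
    _ = ∑ m ∈ cf.support, (cf m) • (Polynomial.C (m : K) * f) := by
        rw [Finset.sum_mul]
        refine Finset.sum_congr rfl fun m _ => ?_
        rw [smul_poly_eq_C_mul, map_mul]
        ring
  rw [mem_intMul, hrep]
  refine Submodule.sum_mem _ fun m hm => Submodule.smul_mem _ _ (Submodule.subset_span ?_)
  obtain ⟨dm, hdmJ, rfl⟩ := hsupp hm
  show Polynomial.C (((dm : ↥D) : K)) * f ∈ intPoly D
  rw [mem_intPoly]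
  intro c hc
  rw [Polynomial.eval_mul, Polynomial.eval_C]
  exact hdmJ c hc

end Proof7E


/-- Let `D` be an integral domain with quotient field `K` that is
one-dimensional and locally finite, and let `T` be a flat overring of `D`.
Then `Int(D)T = Int(T)`. -/
theorem statement7 {K : Type*} [Field K] (D : Subring K) [IsFractionRing ↥D K]
    (hdim : ringKrullDim ↥D = 1)
    (hlf : ∀ x : ↥D, x ≠ 0 → {M : Ideal ↥D | M.IsMaximal ∧ x ∈ M}.Finite)
    (T : Subring K) (hDT : D ≤ T) (hflat : SubringFlat D T hDT) :
    intMul D T = intPoly T := by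
  apply le_antisymm
  · intro p hp
    rw [mem_intPoly]
    intro t ht
    have hp' : p ∈ Submodule.span ↥T ((intPoly D : Set (Polynomial K))) := hp
    clear hp
    induction hp' using Submodule.span_induction with
    | mem g hg =>
      exact s7_goal1 hdim hlf hDT hflat (fun c hc => hg c hc) ht
    | zero => simpa using zero_mem T
    | add q r _ _ hq hr =>
      rw [Polynomial.eval_add]
      exact add_mem hq hr
    | smul u q _ hq =>
      rw [smul_poly_eq_C_mul, Polynomial.eval_mul, Polynomial.eval_C]
      exact mul_mem u.2 hq
  · intro p hp
    exact s7_goal2 hdim hlf hDT hflat (fun t ht => hp t ht)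
end

section
/- Let D be an integral domain with quotient field K, let T be a flat overring of D, and let Λ be a family of flat overrings of T that is complete over T, i.e., every ideal J of T satisfies J = ⋂_{S∈Λ} JS. If Int(D)S = Int(S) for every S ∈ Λ, then Int(D)T = Int(T). -/
set_option maxHeartbeats 1000000


open Polynomial

universe u

section S8Aux
variable {K : Type u} [Field K]

def condSet (T : Subring K) (z : K) : Ideal ↥T where
  carrier := {t : ↥T | (t : K) * z ∈ T}
  zero_mem' := by
    show ((0 : ↥T) : K) * z ∈ T
    rw [ZeroMemClass.coe_zero, zero_mul]; exact zero_mem T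
  add_mem' := by
    intro a b ha hb
    show ((a + b : ↥T) : K) * z ∈ T
    rw [AddMemClass.coe_add, add_mul]
    exact add_mem ha hb
  smul_mem' := by
    intro r t ht
    show ((r * t : ↥T) : K) * z ∈ T
    rw [MulMemClass.coe_mul, mul_assoc]
    exact mul_mem r.2 ht

def condList (T : Subring K) (l : List K) : Ideal ↥T where
  carrier := {t : ↥T | ∀ z ∈ l, (t : K) * z ∈ T}
  zero_mem' := by
    intro z _
    show ((0 : ↥T) : K) * z ∈ T
    rw [ZeroMemClass.coe_zero, zero_mul]; exact zero_mem T
  add_mem' := by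
    intro a b ha hb z hz
    show ((a + b : ↥T) : K) * z ∈ T
    rw [AddMemClass.coe_add, add_mul]
    exact add_mem (ha z hz) (hb z hz)
  smul_mem' := by
    intro r t ht z hz
    show ((r * t : ↥T) : K) * z ∈ T
    rw [MulMemClass.coe_mul, mul_assoc]
    exact mul_mem r.2 (ht z hz)

def coeLin (S : Subring K) : ↥S →ₗ[↥S] K where
  toFun := fun s => (s : K)
  map_add' := fun _ _ => rfl
  map_smul' := fun r x => by
    show ((r * x : ↥S) : K) = r • ((x : ↥S) : K)
    rw [Subring.smul_def, smul_eq_mul, MulMemClass.coe_mul]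

lemma mem_idealSpan_iff_coe_mem_span {T S : Subring K} (h : T ≤ S) (B : Set ↥T) (u : ↥S) :
    u ∈ Ideal.span (Subring.inclusion h '' B) ↔
      (u : K) ∈ Submodule.span ↥S ((fun t : ↥T => (t : K)) '' B) := by
  have himg : (coeLin S) '' (Subring.inclusion h '' B) = (fun t : ↥T => (t : K)) '' B := by
    rw [Set.image_image]; rfl
  constructor
  · intro hu
    have h2 := Submodule.mem_map_of_mem (f := coeLin S) hu
    rw [Ideal.span, Submodule.map_span, himg] at h2
    exact h2
  · intro hu
    have h2 : (coeLin S) u ∈ Submodule.map (coeLin S) (Ideal.span (Subring.inclusion h '' B)) := by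
      rw [Ideal.span, Submodule.map_span, himg]; exact hu
    obtain ⟨y, hy, hyu⟩ := h2
    have : y = u := Subtype.ext hyu
    rwa [← this]

lemma ulift_bool_sum {A : Type*} [AddCommMonoid A] (F : ULift.{u} Bool → A) :
    ∑ i, F i = F ⟨true⟩ + F ⟨false⟩ := by
  rw [← (Equiv.ulift (α := Bool)).symm.sum_comp F]
  exact Fintype.sum_bool _

lemma one_mem_span_condSet {T S : Subring K} (h : T ≤ S) (hfl : SubringFlat T S h)
    {z : K} (hz : z ∈ S) (a b : ↥T) (hb : (b : K) ≠ 0) (hab : (b : K) * z = (a : K)) :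
    (1 : K) ∈ Submodule.span ↥S ((fun t : ↥T => (t : K)) '' ((condSet T z : Set ↥T))) := by
  letI : Algebra ↥T ↥S := (Subring.inclusion h).toAlgebra
  haveI hflat : Module.Flat ↥T ↥S := hfl
  have smulcoe : ∀ (t : ↥T) (σ : ↥S), ((t • σ : ↥S) : K) = (t : K) * (σ : K) := by
    intro t σ
    rw [Algebra.smul_def]
    rfl
  set zS : ↥S := ⟨z, hz⟩ with hzS
  set c : ULift.{u} Bool → ↥T := fun i => if i.down then b else -a with hc
  set m : ULift.{u} Bool → ↥S := fun i => if i.down then zS else 1 with hm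
  have hrel : ∑ i, c i • m i = 0 := by
    rw [ulift_bool_sum (fun i => c i • m i)]
    apply Subtype.ext
    show ((c ⟨true⟩ • m ⟨true⟩ + c ⟨false⟩ • m ⟨false⟩ : ↥S) : K) = ((0 : ↥S) : K)
    rw [AddMemClass.coe_add, smulcoe, smulcoe]
    simp only [hc, hm, if_pos, if_neg, ZeroMemClass.coe_zero]
    show (b : K) * z + ((-a : ↥T) : K) * ((1 : ↥S) : K) = 0
    rw [hab, NegMemClass.coe_neg, OneMemClass.coe_one, mul_one]
    ring
  obtain ⟨κ, A, y, hAy, hrel2⟩ :=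
    @Module.Flat.isTrivialRelation_of_sum_smul_eq_zero ↥T ↥S _ _ _ hflat
      (ULift.{u} Bool) _ c m hrel
  have hone : (1 : ↥S) = ∑ j, A ⟨false⟩ j • y j := hAy ⟨false⟩
  have hcond : ∀ j, A ⟨false⟩ j ∈ condSet T z := by
    intro j
    have h2 := hrel2 j
    rw [ulift_bool_sum (fun i => c i * A i j)] at h2
    have h3 : b * A ⟨true⟩ j + (-a) * A ⟨false⟩ j = 0 := h2
    have h4 : (b : K) * (A ⟨true⟩ j : K) = (a : K) * (A ⟨false⟩ j : K) := by
      have := congrArg (fun t : ↥T => (t : K)) h3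
      push_cast at this
      linear_combination this
    show ((A ⟨false⟩ j : ↥T) : K) * z ∈ T
    have h5 : (b : K) * ((A ⟨false⟩ j : K) * z) = (b : K) * (A ⟨true⟩ j : K) := by
      rw [h4, ← hab]; ring
    have h6 : (A ⟨false⟩ j : K) * z = (A ⟨true⟩ j : K) := mul_left_cancel₀ hb h5
    rw [h6]
    exact (A ⟨true⟩ j).2
  have hcoe : (1 : K) = ∑ j, (y j : K) * (A ⟨false⟩ j : K) := by
    have h8 := congrArg (fun σ : ↥S => (σ : K)) hone
    simp only [OneMemClass.coe_one, AddSubmonoidClass.coe_finset_sum] at h8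
    rw [h8]
    apply Finset.sum_congr rfl
    intro j _
    rw [smulcoe]
    ring
  rw [hcoe]
  apply Submodule.sum_mem
  intro j _
  have hmem : (A ⟨false⟩ j : K) ∈ (fun t : ↥T => (t : K)) '' ((condSet T z : Set ↥T)) :=
    ⟨A ⟨false⟩ j, hcond j, rfl⟩
  have h7 := Submodule.smul_mem
    (Submodule.span ↥S ((fun t : ↥T => (t : K)) '' ((condSet T z : Set ↥T)))) (y j)
    (Submodule.subset_span hmem)
  rwa [Subring.smul_def, smul_eq_mul] at h7

lemma exists_fraction (D : Subring K) [IsFractionRing ↥D K] {T : Subring K} (hDT : D ≤ T)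
    (z : K) : ∃ a b : ↥T, (b : K) ≠ 0 ∧ (b : K) * z = (a : K) := by
  obtain ⟨a0, b0, hb0, habd⟩ := IsFractionRing.div_surjective (A := ↥D) z
  have hb' : ((b0 : ↥D) : K) ≠ 0 := by
    intro h0
    exact nonZeroDivisors.ne_zero hb0 (Subtype.ext h0)
  refine ⟨⟨(a0 : K), hDT a0.2⟩, ⟨(b0 : K), hDT b0.2⟩, hb', ?_⟩
  show (b0 : K) * z = (a0 : K)
  have habd' : ((a0 : ↥D) : K) / ((b0 : ↥D) : K) = z := habd
  rw [← habd']
  field_simp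

lemma condSet_span_top (D : Subring K) [IsFractionRing ↥D K] {T S : Subring K} (hDT : D ≤ T)
    (h : T ≤ S) (hfl : SubringFlat T S h) {z : K} (hz : z ∈ S) :
    Ideal.span (Subring.inclusion h '' ((condSet T z : Set ↥T))) = ⊤ := by
  obtain ⟨a, b, hb, hab⟩ := exists_fraction D hDT z
  rw [Ideal.eq_top_iff_one, mem_idealSpan_iff_coe_mem_span h _ 1, OneMemClass.coe_one]
  exact one_mem_span_condSet h hfl hz a b hb hab

lemma condList_span_top (D : Subring K) [IsFractionRing ↥D K] {T S : Subring K} (hDT : D ≤ T)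
    (h : T ≤ S) (hfl : SubringFlat T S h) :
    ∀ l : List K, (∀ z ∈ l, z ∈ S) →
      Ideal.span (Subring.inclusion h '' ((condList T l : Set ↥T))) = ⊤ := by
  intro l
  induction l with
  | nil =>
    intro _
    rw [Ideal.eq_top_iff_one]
    apply Ideal.subset_span
    refine ⟨1, ?_, map_one _⟩
    intro z hz
    exact absurd hz (List.not_mem_nil (a := z))
  | cons z l ih =>
    intro hmem
    have hz : z ∈ S := hmem z (List.mem_cons_self (a := z) (l := l))
    have hl : ∀ w ∈ l, w ∈ S := fun w hw => hmem w (List.mem_cons_of_mem z hw)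
    have hheadtop := condSet_span_top D hDT h hfl hz
    have htail := ih hl
    rw [Ideal.eq_top_iff_one]
    have hprod : Ideal.span (Subring.inclusion h '' ((condSet T z : Set ↥T))) *
        Ideal.span (Subring.inclusion h '' ((condList T l : Set ↥T))) ≤
        Ideal.span (Subring.inclusion h '' ((condList T (z :: l) : Set ↥T))) := by
      rw [Ideal.span_mul_span']
      apply Ideal.span_mono
      rintro x ⟨p, ⟨t, ht, rfl⟩, q, ⟨t', ht', rfl⟩, rfl⟩
      refine ⟨t * t', ?_, map_mul _ _ _⟩
      intro w hw
      rcases List.mem_cons.mp hw with hw | hw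
      · subst hw
        show ((t * t' : ↥T) : K) * w ∈ T
        have heq : ((t * t' : ↥T) : K) * w = (t' : K) * ((t : K) * w) := by
          push_cast; ring
        rw [heq]
        exact mul_mem t'.2 ht
      · show ((t * t' : ↥T) : K) * w ∈ T
        have heq : ((t * t' : ↥T) : K) * w = (t : K) * ((t' : K) * w) := by
          push_cast; ring
        rw [heq]
        exact mul_mem t.2 (ht' w hw)
    have h1 : (1 : ↥S) ∈ Ideal.span (Subring.inclusion h '' ((condSet T z : Set ↥T))) *
        Ideal.span (Subring.inclusion h '' ((condList T l : Set ↥T))) := by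
      rw [hheadtop, htail, Ideal.top_mul]
      trivial
    exact hprod h1

lemma intPolyT_eval_mem (D : Subring K) [IsFractionRing ↥D K] {T : Subring K} (hDT : D ≤ T) :
    ∀ (n : ℕ) (f : Polynomial K), (∀ d ∈ T, f.eval d ∈ T) → f.natDegree ≤ n →
      ∀ (S : Subring K) (h : T ≤ S), SubringFlat T S h → ∀ s : K, s ∈ S → f.eval s ∈ S := by
  intro n
  induction n with
  | zero =>
    intro f hf hdeg S h hfl s hs
    have h0 := hf 0 (zero_mem T)
    rw [Polynomial.eq_C_of_natDegree_le_zero hdeg, Polynomial.eval_C] at h0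
    rw [Polynomial.eq_C_of_natDegree_le_zero hdeg, Polynomial.eval_C]
    exact h h0
  | succ n ih =>
    intro f hf hdeg S h hfl s hs
    have key : ∀ t : ↥T, (t : K) * s ∈ T → (t : K) ^ (n + 1) * f.eval s ∈ S := by
      intro t hts
      set r : Polynomial K := ∑ i ∈ Finset.range (n + 2),
        Polynomial.C (f.coeff i * ((t : K) ^ i - (t : K) ^ (n + 1))) * Polynomial.X ^ i with hr
      have heval : ∀ y : K, r.eval y = f.eval ((t : K) * y) - (t : K) ^ (n + 1) * f.eval y := by
        intro y
        rw [hr, Polynomial.eval_finset_sum]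
        simp only [Polynomial.eval_mul, Polynomial.eval_C, Polynomial.eval_pow,
          Polynomial.eval_X]
        rw [Polynomial.eval_eq_sum_range' (n := n + 2) (by omega) ((t : K) * y),
            Polynomial.eval_eq_sum_range' (n := n + 2) (by omega) y,
            Finset.mul_sum, ← Finset.sum_sub_distrib]
        apply Finset.sum_congr rfl
        intro i _
        rw [mul_pow]
        ring
      have hrdeg : r.natDegree ≤ n := by
        rw [Polynomial.natDegree_le_iff_coeff_eq_zero]
        intro N hN
        rw [hr, Polynomial.finset_sum_coeff]
        apply Finset.sum_eq_zero
        intro i hi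
        rw [Polynomial.coeff_C_mul, Polynomial.coeff_X_pow]
        rcases eq_or_ne N i with rfl | hNi
        · have hi' : N = n + 1 := by
            have := Finset.mem_range.mp hi; omega
          subst hi'
          simp
        · simp [hNi]
      have hrint : ∀ d ∈ T, r.eval d ∈ T := by
        intro d hd
        rw [heval d]
        exact sub_mem (hf _ (mul_mem t.2 hd)) (mul_mem (pow_mem t.2 _) (hf d hd))
      have hres := ih r hrint hrdeg S h hfl s hs
      rw [heval s] at hres
      have hTS : f.eval ((t : K) * s) ∈ S := h (hf _ hts)
      have heq2 : (t : K) ^ (n + 1) * f.eval s =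
          f.eval ((t : K) * s) - (f.eval ((t : K) * s) - (t : K) ^ (n + 1) * f.eval s) := by
        ring
      rw [heq2]
      exact sub_mem hTS hres
    have hspan := condSet_span_top D hDT h hfl hs
    have hpow := Ideal.span_pow_eq_top _ hspan (n + 1)
    have hWle : Ideal.span ((fun x : ↥S => x ^ (n + 1)) ''
        (Subring.inclusion h '' ((condSet T s : Set ↥T)))) ≤ condSet S (f.eval s) := by
      rw [Ideal.span_le]
      rintro x ⟨p, ⟨t, ht, rfl⟩, rfl⟩
      show (((Subring.inclusion h t) ^ (n + 1) : ↥S) : K) * f.eval s ∈ S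
      have hx : (((Subring.inclusion h t) ^ (n + 1) : ↥S) : K) = (t : K) ^ (n + 1) := by
        push_cast
        rfl
      rw [hx]
      exact key t ht
    have h1W : (1 : ↥S) ∈ condSet S (f.eval s) := hWle (by rw [hpow]; trivial)
    have h2 : ((1 : ↥S) : K) * f.eval s ∈ S := h1W
    rwa [OneMemClass.coe_one, one_mul] at h2

/-- The conductor of a polynomial `f` into `Int(D)T`. -/
def polyCond (D T : Subring K) (f : Polynomial K) : Ideal ↥T where
  carrier := {u : ↥T | Polynomial.C (u : K) * f ∈
    Submodule.span ↥T ((intPoly D : Set (Polynomial K)))}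
  zero_mem' := by
    show Polynomial.C ((0 : ↥T) : K) * f ∈
      Submodule.span ↥T ((intPoly D : Set (Polynomial K)))
    rw [ZeroMemClass.coe_zero, map_zero, zero_mul]
    exact Submodule.zero_mem _
  add_mem' := by
    intro a b ha hb
    show Polynomial.C ((a + b : ↥T) : K) * f ∈
      Submodule.span ↥T ((intPoly D : Set (Polynomial K)))
    rw [AddMemClass.coe_add, map_add, add_mul]
    exact Submodule.add_mem _ ha hb
  smul_mem' := by
    intro r u hu
    show Polynomial.C ((r * u : ↥T) : K) * f ∈
      Submodule.span ↥T ((intPoly D : Set (Polynomial K)))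
    rw [MulMemClass.coe_mul, map_mul, mul_assoc]
    have h2 := Submodule.smul_mem
      (Submodule.span ↥T ((intPoly D : Set (Polynomial K)))) r hu
    rwa [smul_poly_eq_C_mul] at h2

end S8Aux

/-- Let `D` be an integral domain with quotient field `K`, let `T` be a flat
overring of `D`, and let `Λ` be a family of flat overrings of `T` that is complete over `T`.
If `Int(D)S = Int(S)` for every `S ∈ Λ`, then `Int(D)T = Int(T)`. -/
theorem statement8 {K : Type*} [Field K] (D : Subring K) [IsFractionRing ↥D K]
    (T : Subring K) (hDT : D ≤ T) (hflatT : SubringFlat D T hDT)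
    (Λ : Set (Subring K)) (hle : ∀ S ∈ Λ, T ≤ S)
    (hflatS : ∀ S, ∀ hS : S ∈ Λ, SubringFlat T S (hle S hS))
    (hcomp : ∀ J : Ideal ↥T, ∀ x : ↥T,
      x ∈ J ↔ ∀ S ∈ Λ, (x : K) ∈ Submodule.span ↥S ((fun t : ↥T => (t : K)) '' (J : Set ↥T)))
    (hloc : ∀ S ∈ Λ, intMul D S = intPoly S) :
    intMul D T = intPoly T := by
  apply le_antisymm
  · -- Int(D)T ⊆ Int(T)
    intro f hf
    rw [mem_intPoly]
    intro d hd
    have hf' : f ∈ Submodule.span ↥T ((intPoly D : Set (Polynomial K))) := hf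
    have hSmem : ∀ S ∈ Λ, f.eval d ∈ S := by
      intro S hS
      clear hf
      induction hf' using Submodule.span_induction with
      | mem g hg =>
        have hg2 : g ∈ intPoly S := by
          rw [← hloc S hS]
          exact intPoly_le_intMul D S hg
        exact hg2 d (hle S hS hd)
      | zero => simpa using zero_mem S
      | add p q _ _ hp hq => rw [Polynomial.eval_add]; exact add_mem hp hq
      | smul u p _ hp =>
        rw [smul_poly_eq_C_mul, Polynomial.eval_mul, Polynomial.eval_C]
        exact mul_mem (hle S hS u.2) hp
    have h1 : (1 : ↥T) ∈ condSet T (f.eval d) := by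
      rw [hcomp (condSet T (f.eval d)) 1]
      intro S hS
      obtain ⟨a, b, hb, hab⟩ := exists_fraction D hDT (f.eval d)
      rw [OneMemClass.coe_one]
      exact one_mem_span_condSet (hle S hS) (hflatS S hS) (hSmem S hS) a b hb hab
    have h2 : ((1 : ↥T) : K) * f.eval d ∈ T := h1
    rwa [OneMemClass.coe_one, one_mul] at h2
  · -- Int(T) ⊆ Int(D)T
    intro f hf
    have hfT : ∀ d ∈ T, f.eval d ∈ T := hf
    have h1 : (1 : ↥T) ∈ polyCond D T f := by
      rw [hcomp (polyCond D T f) 1]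
      intro S hS
      have hfS : ∀ s ∈ S, f.eval s ∈ S := fun s hs =>
        intPolyT_eval_mem D hDT f.natDegree f hfT le_rfl S (hle S hS) (hflatS S hS) s hs
      have hfS' : f ∈ intMul D S := by
        rw [hloc S hS]
        exact hfS
      rw [mem_intMul] at hfS'
      obtain ⟨c, hsupp, hsum⟩ := Submodule.mem_span_set.mp hfS'
      have hlS : ∀ z ∈ c.support.toList.map (fun g => ((c g : K))), z ∈ S := by
        intro z hz
        obtain ⟨g, hg, rfl⟩ := List.mem_map.mp hz
        exact (c g).2
      have htop := condList_span_top D hDT (hle S hS) (hflatS S hS)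
        (c.support.toList.map (fun g => ((c g : K)))) hlS
      have hsub : condList T (c.support.toList.map (fun g => ((c g : K)))) ≤ polyCond D T f := by
        intro u hu
        show Polynomial.C (u : K) * f ∈
          Submodule.span ↥T ((intPoly D : Set (Polynomial K)))
        rw [← hsum, Finsupp.sum, Finset.mul_sum]
        apply Submodule.sum_mem
        intro g hg
        have hcg : (u : K) * ((c g : K)) ∈ T :=
          hu ((c g : K)) (List.mem_map_of_mem (Finset.mem_toList.mpr hg))
        have heq : Polynomial.C (u : K) * ((c g) • g) =
            (⟨(u : K) * (c g : K), hcg⟩ : ↥T) • g := by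
          rw [smul_poly_eq_C_mul, smul_poly_eq_C_mul, ← mul_assoc, ← map_mul]
        rw [heq]
        have hgmem : g ∈ (intPoly D : Set (Polynomial K)) := hsupp (Finset.mem_coe.mpr hg)
        exact Submodule.smul_mem (Submodule.span ↥T ((intPoly D : Set (Polynomial K)))) _
          (Submodule.subset_span hgmem)
      have himgsub : Subring.inclusion (hle S hS) ''
          (condList T (c.support.toList.map (fun g => ((c g : K)))) : Set ↥T) ⊆
          Subring.inclusion (hle S hS) '' (polyCond D T f : Set ↥T) :=
        Set.image_mono hsub
      have hmono := Ideal.span_mono himgsub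
      have h3 : (1 : ↥S) ∈ Ideal.span (Subring.inclusion (hle S hS) ''
          (polyCond D T f : Set ↥T)) := hmono (by rw [htop]; trivial)
      have h4 := (mem_idealSpan_iff_coe_mem_span (hle S hS)
        ((polyCond D T f : Set ↥T)) 1).mp h3
      rw [OneMemClass.coe_one] at h4
      rw [OneMemClass.coe_one]
      exact h4
    have h2 : Polynomial.C ((1 : ↥T) : K) * f ∈
        Submodule.span ↥T ((intPoly D : Set (Polynomial K))) := h1
    rw [OneMemClass.coe_one, map_one, one_mul] at h2
    exact h2
end

section
/- Let D be an integral domain with quotient field K and let T be a flat overring of D. Then Int(D)T is flat as an Int(D)-module. -/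
open Polynomial

open scoped TensorProduct in
set_option maxHeartbeats 1600000 in
set_option synthInstance.maxHeartbeats 800000 in
/-- Let `D` be an integral domain with quotient field `K` and let `T` be a flat
overring of `D`. Then `Int(D)T` is flat as an `Int(D)`-module. -/
theorem statement9 {K : Type*} [Field K] (D : Subring K) [IsFractionRing ↥D K]
    (T : Subring K) (hDT : D ≤ T) (hflat : SubringFlat D T hDT) :
    SubringFlat (intPoly D) (intMul D T) (intPoly_le_intMul D T) := by

  classical
  -- Notation
  set R := ↥(intPoly D) with hR
  -- Algebra instances
  letI : Algebra ↥D ↥T := (Subring.inclusion hDT).toAlgebra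
  haveI hTflat : Module.Flat ↥D ↥T := hflat
  letI : Algebra ↥D R := (constHom D).toAlgebra
  haveI hKflat : Module.Flat ↥D K := IsLocalization.flat K (nonZeroDivisors ↥D)
  haveI hPflat : Module.Flat ↥D (Polynomial K) := Module.Flat.trans ↥D K (Polynomial K)
  -- The algebra maps into K[X]
  let φR : R →ₐ[↥D] Polynomial K :=
    { toRingHom := (intPoly D).subtype
      commutes' := fun d => rfl }
  let φT : ↥T →ₐ[↥D] Polynomial K :=
    { toRingHom := (Polynomial.C : K →+* Polynomial K).comp T.subtype
      commutes' := fun d => rfl }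
  let Φ : (R ⊗[↥D] ↥T) →ₐ[↥D] Polynomial K := Algebra.TensorProduct.productMap φR φT
  have hΦ_tmul : ∀ (a : R) (b : ↥T), Φ (a ⊗ₜ b) = (a : Polynomial K) * Polynomial.C (b : K) :=
    fun a b => Algebra.TensorProduct.productMap_apply_tmul φR φT a b
  -- Injectivity of Φ
  let jT : ↥T →ₗ[↥D] K :=
    { toFun := fun t => (t : K)
      map_add' := fun a b => rfl
      map_smul' := fun d t => by
        show ((d • t : ↥T) : K) = d • (t : K)
        rw [Algebra.smul_def, Algebra.smul_def]
        push_cast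
        rfl }
  let f1 : (R ⊗[↥D] ↥T) →ₗ[↥D] (Polynomial K ⊗[↥D] ↥T) :=
    LinearMap.rTensor ↥T φR.toLinearMap
  have hf1 : Function.Injective f1 :=
    Module.Flat.rTensor_preserves_injective_linearMap φR.toLinearMap
      (fun a b h => Subtype.ext h)
  let f2 : (Polynomial K ⊗[↥D] ↥T) →ₗ[↥D] (Polynomial K ⊗[↥D] K) :=
    LinearMap.lTensor (Polynomial K) jT
  have hf2 : Function.Injective f2 :=
    Module.Flat.lTensor_preserves_injective_linearMap jT (fun a b h => Subtype.ext h)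
  have hb : IsBaseChange K (LinearMap.id : Polynomial K →ₗ[↥D] Polynomial K) :=
    (isLocalizedModule_iff_isBaseChange (nonZeroDivisors ↥D) K _).mp
      (isLocalizedModule_id (nonZeroDivisors ↥D) (Polynomial K) K)
  let f3 : (Polynomial K ⊗[↥D] K) →ₗ[↥D] Polynomial K :=
    (hb.equiv.restrictScalars ↥D).toLinearMap.comp
      (TensorProduct.comm ↥D (Polynomial K) K).toLinearMap
  have hf3 : Function.Injective f3 :=
    (hb.equiv.restrictScalars ↥D).injective.comp
      (TensorProduct.comm ↥D (Polynomial K) K).injective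
  have hcomp : ∀ z : R ⊗[↥D] ↥T, Φ z = f3 (f2 (f1 z)) := by
    intro z
    induction z using TensorProduct.induction_on with
    | zero => simp
    | tmul a b =>
      rw [hΦ_tmul]
      show (a : Polynomial K) * Polynomial.C (b : K) =
        f3 (f2 (LinearMap.rTensor ↥T φR.toLinearMap (a ⊗ₜ b)))
      rw [LinearMap.rTensor_tmul]
      show (a : Polynomial K) * Polynomial.C (b : K) =
        f3 (LinearMap.lTensor (Polynomial K) jT ((a : Polynomial K) ⊗ₜ b))
      rw [LinearMap.lTensor_tmul]
      show (a : Polynomial K) * Polynomial.C (b : K) =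
        hb.equiv ((TensorProduct.comm ↥D (Polynomial K) K) ((a : Polynomial K) ⊗ₜ (b : K)))
      rw [TensorProduct.comm_tmul, hb.equiv_tmul]
      rw [LinearMap.id_apply, Polynomial.smul_eq_C_mul, mul_comm]
    | add x y hx hy => rw [map_add Φ, hx, hy, f1.map_add, f2.map_add, f3.map_add]
  have hΦinj : Function.Injective Φ := by
    intro x y hxy
    apply hf1; apply hf2; apply hf3
    rw [← hcomp, ← hcomp, hxy]
  -- Range of Φ
  have hmem : ∀ z : R ⊗[↥D] ↥T, Φ z ∈ intMul D T := by
    intro z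
    induction z using TensorProduct.induction_on with
    | zero => rw [map_zero Φ]; exact zero_mem _
    | tmul a b =>
      rw [hΦ_tmul]
      exact mul_mem (intPoly_le_intMul D T a.2) (C_mem_intMul D T b)
    | add x y hx hy => rw [map_add Φ]; exact add_mem hx hy
  have hsurj : ∀ p ∈ intMul D T, ∃ z : R ⊗[↥D] ↥T, Φ z = p := by
    intro p hp
    rw [mem_intMul] at hp
    induction hp using Submodule.span_induction with
    | mem x hx => exact ⟨(⟨x, hx⟩ : R) ⊗ₜ 1, by rw [hΦ_tmul]; simp⟩
    | zero => exact ⟨0, Φ.map_zero⟩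
    | add x y _ _ hx hy =>
      obtain ⟨zx, hzx⟩ := hx
      obtain ⟨zy, hzy⟩ := hy
      exact ⟨zx + zy, by rw [map_add Φ, hzx, hzy]⟩
    | smul t y _ hy =>
      obtain ⟨z, hz⟩ := hy
      refine ⟨((1 : R) ⊗ₜ t) * z, ?_⟩
      rw [map_mul Φ, hΦ_tmul, hz, smul_poly_eq_C_mul]
      push_cast
      ring
  -- The R-module structure on Int(D)T and the R-linear equivalence
  letI : Algebra R ↥(intMul D T) := (Subring.inclusion (intPoly_le_intMul D T)).toAlgebra
  letI instA : Algebra R (R ⊗[↥D] ↥T) := Algebra.TensorProduct.leftAlgebra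
  letI : Module R (R ⊗[↥D] ↥T) := Algebra.toModule
  let ψ : (R ⊗[↥D] ↥T) →ₗ[R] ↥(intMul D T) :=
    { toFun := fun z => ⟨Φ z, hmem z⟩
      map_add' := fun x y => by
        refine Subtype.ext ?_
        show Φ (x + y) = _
        rw [map_add Φ]
        rfl
      map_smul' := fun r z => by
        refine Subtype.ext ?_
        have e1 : r • z = ((r ⊗ₜ (1 : ↥T) : R ⊗[↥D] ↥T)) * z := by
          induction z using TensorProduct.induction_on with
          | zero => rw [smul_zero, mul_zero]
          | tmul a b =>
            rw [TensorProduct.smul_tmul', Algebra.TensorProduct.tmul_mul_tmul,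
              smul_eq_mul, one_mul]
          | add x y hx hy => rw [smul_add, hx, hy, mul_add]
        show Φ (r • z) = ((r • (⟨Φ z, hmem z⟩ : ↥(intMul D T)) : ↥(intMul D T)) : Polynomial K)
        rw [e1, map_mul Φ, hΦ_tmul, Algebra.smul_def]
        push_cast
        simp only [map_one, mul_one]
        rfl }
  have hψbij : Function.Bijective ψ := by
    constructor
    · intro x y hxy
      apply hΦinj
      exact congrArg Subtype.val hxy
    · rintro ⟨p, hp⟩
      obtain ⟨z, hz⟩ := hsurj p hp
      exact ⟨z, Subtype.ext hz⟩
  let e : (R ⊗[↥D] ↥T) ≃ₗ[R] ↥(intMul D T) := LinearEquiv.ofBijective ψ hψbij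
  unfold SubringFlat
  exact Module.Flat.of_linearEquiv e.symm
end

section
/- Let D be an integral domain with quotient field K, let T be a flat overring of D, and let ℒ be a sublattice of the set of overrings of D (i.e., ℒ is closed under finite intersections and under taking the subring of K generated by two members) such that ⋃_{S∈ℒ} S = T. If the extension map Pic(D) → Pic(S), [I] ↦ [IS], is surjective for every S ∈ ℒ, then the extension map Pic(D) → Pic(T) is surjective. -/
open Polynomial

section Statement16Aux

set_option synthInstance.maxHeartbeats 1000000
set_option maxHeartbeats 1600000

open FractionalIdeal

variable {A B C : Type*} [CommRing A] [IsDomain A] [CommRing B] [IsDomain B]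
  [CommRing C] [IsDomain C]

lemma extFrac_zero (f : A →+* B) (hf : Function.Injective f) :
    extFrac f hf (0 : FractionalIdeal (nonZeroDivisors A) (FractionRing A)) = 0 :=
  FractionalIdeal.extended_zero _ _

lemma extFrac_add (f : A →+* B) (hf : Function.Injective f)
    (I J : FractionalIdeal (nonZeroDivisors A) (FractionRing A)) :
    extFrac f hf (I + J) = extFrac f hf I + extFrac f hf J :=
  FractionalIdeal.extended_add _ _ I J

lemma extFrac_sum (f : A →+* B) (hf : Function.Injective f) {ι : Type*} (s : Finset ι)
    (F : ι → FractionalIdeal (nonZeroDivisors A) (FractionRing A)) :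
    extFrac f hf (∑ i ∈ s, F i) = ∑ i ∈ s, extFrac f hf (F i) := by
  classical
  induction s using Finset.induction with
  | empty => rw [Finset.sum_empty, Finset.sum_empty]; exact extFrac_zero f hf
  | @insert a s ha ih =>
    rw [Finset.sum_insert ha, Finset.sum_insert ha, extFrac_add, ih]

lemma extFrac_congr (f f' : A →+* B) (hf : Function.Injective f) (hf' : Function.Injective f')
    (h : f = f') (I : FractionalIdeal (nonZeroDivisors A) (FractionRing A)) :
    extFrac f hf I = extFrac f' hf' I := by
  subst h; rfl

lemma extFrac_comp (f : A →+* B) (g : B →+* C) (hf : Function.Injective f)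
    (hg : Function.Injective g)
    (I : FractionalIdeal (nonZeroDivisors A) (FractionRing A)) :
    extFrac g hg (extFrac f hf I) = extFrac (g.comp f) (hg.comp hf) I := by
  set mf := IsLocalization.map (S := FractionRing A) (FractionRing B) f
    (nonZeroDivisors_le_comap_of_injective f hf) with hmf
  set mg := IsLocalization.map (S := FractionRing B) (FractionRing C) g
    (nonZeroDivisors_le_comap_of_injective g hg) with hmg
  set mgf := IsLocalization.map (S := FractionRing A) (FractionRing C) (g.comp f)
    (nonZeroDivisors_le_comap_of_injective (g.comp f) (hg.comp hf)) with hmgf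
  have hcomp : ∀ x : FractionRing A, mg (mf x) = mgf x := by
    intro x
    rw [hmg, hmf, IsLocalization.map_map]
  apply FractionalIdeal.coeToSubmodule_injective
  beta_reduce
  have h1 : (extFrac g hg (extFrac f hf I) : Submodule C (FractionRing C)) =
      Submodule.span C (mg '' (extFrac f hf I : Set (FractionRing B))) :=
    FractionalIdeal.coe_extended_eq_span _ _ _
  have h2 : (extFrac (g.comp f) (hg.comp hf) I : Submodule C (FractionRing C)) =
      Submodule.span C (mgf '' (I : Set (FractionRing A))) :=
    FractionalIdeal.coe_extended_eq_span _ _ _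
  rw [h1, h2]
  apply le_antisymm
  · rw [Submodule.span_le]
    rintro _ ⟨y, hy, rfl⟩
    have hy' : y ∈ Submodule.span B (mf '' (I : Set (FractionRing A))) := by
      have h := SetLike.mem_coe.mp hy
      exact (FractionalIdeal.mem_extended_iff (FractionRing B)
        (nonZeroDivisors_le_comap_of_injective f hf) I y).mp h
    clear hy
    induction hy' using Submodule.span_induction with
    | mem z hz =>
      obtain ⟨a, ha, rfl⟩ := hz
      rw [hcomp a]
      exact Submodule.subset_span ⟨a, ha, rfl⟩
    | zero => simpa using Submodule.zero_mem _
    | add z w _ _ hz hw => rw [_root_.map_add]; exact Submodule.add_mem _ hz hw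
    | smul b z _ hz =>
      have : mg (b • z) = (g b) • mg z := by
        rw [Algebra.smul_def, _root_.map_mul, IsLocalization.map_eq, ← Algebra.smul_def]
      rw [this]
      exact Submodule.smul_mem _ _ hz
  · rw [Submodule.span_le]
    rintro _ ⟨a, ha, rfl⟩
    rw [← hcomp a]
    refine Submodule.subset_span ⟨mf a, ?_, rfl⟩
    exact SetLike.mem_coe.mpr ((FractionalIdeal.mem_extended_iff _ _ _ _).mpr
      (Submodule.subset_span ⟨a, ha, rfl⟩))

lemma mapCG_mk (f : A →+* B) (hf : Function.Injective f)
    (u : (FractionalIdeal (nonZeroDivisors A) (FractionRing A))ˣ) :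
    mapCG f hf (ClassGroup.mk (FractionRing A) u) = ClassGroup.mk (FractionRing B) (Units.map (extFrac f hf) u) := by
  have h1 : (ClassGroup.mk (FractionRing A) u : ClassGroup A) = QuotientGroup.mk u :=
    (ClassGroup.Quot_mk_eq_mk u).symm
  rw [h1]
  rfl

lemma fiSum_le {R P : Type*} [CommRing R] [CommRing P] [Algebra R P] {S : Submonoid R}
    {ι : Type*} (s : Finset ι) (F : ι → FractionalIdeal S P) {B : FractionalIdeal S P}
    (h : ∀ i ∈ s, F i ≤ B) : (∑ i ∈ s, F i) ≤ B := by
  classical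
  induction s using Finset.induction with
  | empty => simpa using FractionalIdeal.zero_le B
  | @insert a s ha ih =>
    rw [Finset.sum_insert ha, ← FractionalIdeal.sup_eq_add]
    exact sup_le (h a (Finset.mem_insert_self a s))
      (ih fun i hi => h i (Finset.mem_insert_of_mem hi))

lemma le_fiSum {R P : Type*} [CommRing R] [CommRing P] [Algebra R P] {S : Submonoid R}
    {ι : Type*} (s : Finset ι) (F : ι → FractionalIdeal S P) {i : ι}
    (h : i ∈ s) : F i ≤ ∑ j ∈ s, F j := by
  classical
  induction s using Finset.induction with
  | empty => simp at h
  | @insert a s ha ih =>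
    rw [Finset.sum_insert ha, ← FractionalIdeal.sup_eq_add]
    rcases Finset.mem_insert.mp h with rfl | hi
    · exact le_sup_left
    · exact le_trans (ih hi) le_sup_right

lemma picExt_trans {K : Type*} [Field K] {D S T : Subring K} (hDS : D ≤ S) (hST : S ≤ T)
    (c : ClassGroup ↥D) :
    picExt (hDS.trans hST) c = picExt hST (picExt hDS c) := by
  obtain ⟨u, rfl⟩ := QuotientGroup.mk_surjective c
  have hQ : (QuotientGroup.mk u : ClassGroup ↥D) = ClassGroup.mk (FractionRing ↥D) u := ClassGroup.Quot_mk_eq_mk u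
  rw [hQ]
  rw [show picExt hDS (ClassGroup.mk (FractionRing ↥D) u) = ClassGroup.mk (FractionRing ↥S)
      (Units.map (extFrac (Subring.inclusion hDS) (subringInclusion_injective hDS)) u)
    from mapCG_mk _ _ u]
  rw [show picExt hST (ClassGroup.mk (FractionRing ↥S)
      (Units.map (extFrac (Subring.inclusion hDS) (subringInclusion_injective hDS)) u)) = _
    from mapCG_mk _ _ _]
  rw [show picExt (hDS.trans hST) (ClassGroup.mk (FractionRing ↥D) u) = ClassGroup.mk (FractionRing ↥T)
      (Units.map (extFrac (Subring.inclusion (hDS.trans hST))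
        (subringInclusion_injective (hDS.trans hST))) u)
    from mapCG_mk _ _ u]
  congr 1
  apply Units.ext
  show extFrac (Subring.inclusion (hDS.trans hST)) _ ↑u
      = extFrac (Subring.inclusion hST) _ (extFrac (Subring.inclusion hDS) _ ↑u)
  rw [extFrac_comp]
  exact extFrac_congr _ _ _ _ (RingHom.ext fun x => rfl) _

end Statement16Aux

open Pointwise

set_option synthInstance.maxHeartbeats 1000000
set_option maxHeartbeats 4000000

/-- Let `T` be a flat overring of `D`, and let `ℒ` be a sublattice of the set
of overrings of `D` whose union is `T`. If `Pic(D) → Pic(S)` is surjective for every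
`S ∈ ℒ`, then `Pic(D) → Pic(T)` is surjective. -/
theorem statement16 {K : Type*} [Field K] (D : Subring K) [IsFractionRing ↥D K]
    (T : Subring K) (hDT : D ≤ T) (hflat : SubringFlat D T hDT)
    (L : Set (Subring K)) (hLD : ∀ S ∈ L, D ≤ S)
    (hinf : ∀ S ∈ L, ∀ S' ∈ L, S ⊓ S' ∈ L)
    (hsup : ∀ S ∈ L, ∀ S' ∈ L, S ⊔ S' ∈ L)
    (hunion : (⋃ S ∈ L, (S : Set K)) = (T : Set K))
    (hsurj : ∀ S, ∀ hS : S ∈ L, Function.Surjective (picExt (hLD S hS))) :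
    Function.Surjective (picExt hDT) := by
  classical
  have hsubT : ∀ S ∈ L, (S : Set K) ⊆ (T : Set K) := by
    intro S hS
    rw [← hunion]
    exact Set.subset_biUnion_of_mem hS
  have hmemT : ∀ x : K, x ∈ T → ∃ S ∈ L, x ∈ S := by
    intro x hx
    have hx' : x ∈ ⋃ S ∈ L, (S : Set K) := by rw [hunion]; exact hx
    simpa using hx'
  have hfinS : ∀ G : Finset K, (∀ x ∈ G, x ∈ T) → ∃ S ∈ L, ∀ x ∈ G, x ∈ S := by
    intro G
    induction G using Finset.induction with
    | empty =>
      intro _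
      obtain ⟨S0, hS0, _⟩ := hmemT 0 (zero_mem T)
      exact ⟨S0, hS0, by simp⟩
    | @insert a s ha ih =>
      intro hmem
      obtain ⟨S1, hS1, h1⟩ := ih (fun x hxx => hmem x (Finset.mem_insert_of_mem hxx))
      obtain ⟨S2, hS2, h2⟩ := hmemT a (hmem a (Finset.mem_insert_self a s))
      refine ⟨S1 ⊔ S2, hsup S1 hS1 S2 hS2, ?_⟩
      intro x hxx
      rcases Finset.mem_insert.mp hxx with rfl | hxs
      · exact SetLike.le_def.mp le_sup_right h2
      · exact SetLike.le_def.mp le_sup_left (h1 x hxs)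
  intro c
  obtain ⟨u, rfl⟩ := QuotientGroup.mk_surjective c
  have hQ : (QuotientGroup.mk u : ClassGroup ↥T) = ClassGroup.mk (FractionRing ↥T) u := ClassGroup.Quot_mk_eq_mk u
  rw [hQ]
  set uu : FractionalIdeal (nonZeroDivisors ↥T) (FractionRing ↥T) := ↑u with huu_def
  set uinv : FractionalIdeal (nonZeroDivisors ↥T) (FractionRing ↥T) := ↑u⁻¹ with huinv_def
  have huu : uu * uinv = 1 := Units.mul_inv u
  have h1mem : (1 : FractionRing ↥T) ∈ uu * uinv := by
    rw [huu]; exact FractionalIdeal.one_mem_one _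
  obtain ⟨F1, F2, hF1, hF2, hspan⟩ := FractionalIdeal.mem_span_mul_finite_of_mem_mul h1mem
  rw [Submodule.mem_span_set] at hspan
  obtain ⟨cf, hsupp, hsum⟩ := hspan
  have hdec : ∀ z : FractionRing ↥T, ∃ x y, z ∈ cf.support → x ∈ F1 ∧ y ∈ F2 ∧ x * y = z := by
    intro z
    by_cases h : z ∈ cf.support
    · obtain ⟨x, hx, y, hy, hxyz⟩ := Set.mem_mul.mp (hsupp (Finset.mem_coe.mpr h))
      exact ⟨x, y, fun _ => ⟨Finset.mem_coe.mp hx, Finset.mem_coe.mp hy, hxyz⟩⟩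
    · exact ⟨1, 1, fun h' => absurd h' h⟩
  choose xx yy hxy using hdec
  choose nu de hde hnd using fun x : FractionRing ↥T => IsFractionRing.div_surjective (A := ↥T) x
  have hvvE : ∀ z : FractionRing ↥T, ∃ t : ↥T,
      z ∈ (1 : FractionalIdeal (nonZeroDivisors ↥T) (FractionRing ↥T)) →
        algebraMap ↥T (FractionRing ↥T) t = z := by
    intro z
    by_cases h : z ∈ (1 : FractionalIdeal (nonZeroDivisors ↥T) (FractionRing ↥T))
    · obtain ⟨t, ht⟩ := (FractionalIdeal.mem_one_iff _).mp h
      exact ⟨t, fun _ => ht⟩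
    · exact ⟨1, fun h' => absurd h' h⟩
  choose vv hvv using hvvE
  set E : Finset (FractionRing ↥T) := (F1 ∪ F2) ∪ F1 * F2 with hE_def
  set G : Finset K :=
    (E.image fun x => ((nu x : ↥T) : K)) ∪ (E.image fun x => ((de x : ↥T) : K)) ∪
      ((F1 * F2).image fun z => ((vv z : ↥T) : K)) ∪
      (cf.support.image fun z => ((cf z : ↥T) : K)) with hG_def
  have hGT : ∀ x ∈ G, x ∈ T := by
    intro x hx
    simp only [hG_def, Finset.mem_union, Finset.mem_image] at hx
    rcases hx with (((⟨z, _, rfl⟩ | ⟨z, _, rfl⟩) | ⟨z, _, rfl⟩) | ⟨z, _, rfl⟩) <;>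
      exact SetLike.coe_mem _
  obtain ⟨S, hSL, hGS⟩ := hfinS G hGT
  have hST : S ≤ T := fun x hx => hsubT S hSL hx
  have hDS : D ≤ S := hLD S hSL
  set ι : ↥S →+* ↥T := Subring.inclusion hST with hι_def
  have hι : Function.Injective ι := subringInclusion_injective hST
  set gmap : FractionRing ↥S →+* FractionRing ↥T :=
    IsLocalization.map (FractionRing ↥T) ι (nonZeroDivisors_le_comap_of_injective ι hι)
    with hgmap_def
  have hg : Function.Injective gmap := gmap.injective
  have hgalg : ∀ s : ↥S, gmap (algebraMap ↥S (FractionRing ↥S) s)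
      = algebraMap ↥T (FractionRing ↥T) (ι s) := by
    intro s
    rw [hgmap_def]
    exact IsLocalization.map_eq _ _
  have hnuS : ∀ x ∈ E, ((nu x : ↥T) : K) ∈ S := by
    intro x hx
    refine hGS _ ?_
    simp only [hG_def, Finset.mem_union, Finset.mem_image]
    exact Or.inl (Or.inl (Or.inl ⟨x, hx, rfl⟩))
  have hdeS : ∀ x ∈ E, ((de x : ↥T) : K) ∈ S := by
    intro x hx
    refine hGS _ ?_
    simp only [hG_def, Finset.mem_union, Finset.mem_image]
    exact Or.inl (Or.inl (Or.inr ⟨x, hx, rfl⟩))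
  have hvvS : ∀ z ∈ F1 * F2, ((vv z : ↥T) : K) ∈ S := by
    intro z hz
    refine hGS _ ?_
    simp only [hG_def, Finset.mem_union, Finset.mem_image]
    exact Or.inl (Or.inr ⟨z, hz, rfl⟩)
  have hcfS : ∀ z ∈ cf.support, ((cf z : ↥T) : K) ∈ S := by
    intro z hz
    refine hGS _ ?_
    simp only [hG_def, Finset.mem_union, Finset.mem_image]
    exact Or.inr ⟨z, hz, rfl⟩
  have hF1E : ∀ x ∈ F1, x ∈ E := by
    intro x hx
    rw [hE_def]
    exact Finset.mem_union_left _ (Finset.mem_union_left _ hx)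
  have hF2E : ∀ x ∈ F2, x ∈ E := by
    intro x hx
    rw [hE_def]
    exact Finset.mem_union_left _ (Finset.mem_union_right _ hx)
  set ξ : FractionRing ↥T → FractionRing ↥S := fun x =>
    if h : x ∈ E then
      algebraMap ↥S (FractionRing ↥S) ⟨((nu x : ↥T) : K), hnuS x h⟩ /
        algebraMap ↥S (FractionRing ↥S) ⟨((de x : ↥T) : K), hdeS x h⟩
    else 0 with hξ_def
  have hgξ : ∀ x ∈ E, gmap (ξ x) = x := by
    intro x hx
    simp only [hξ_def, dif_pos hx]
    rw [map_div₀, hgalg, hgalg]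
    have e1 : ι (⟨((nu x : ↥T) : K), hnuS x hx⟩ : ↥S) = nu x := Subtype.ext rfl
    have e2 : ι (⟨((de x : ↥T) : K), hdeS x hx⟩ : ↥S) = de x := Subtype.ext rfl
    rw [e1, e2]
    exact hnd x
  set J : FractionalIdeal (nonZeroDivisors ↥S) (FractionRing ↥S) :=
    ∑ x ∈ F1, FractionalIdeal.spanSingleton (nonZeroDivisors ↥S) (ξ x) with hJ_def
  set J' : FractionalIdeal (nonZeroDivisors ↥S) (FractionRing ↥S) :=
    ∑ y ∈ F2, FractionalIdeal.spanSingleton (nonZeroDivisors ↥S) (ξ y) with hJ'_def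
  have hprod : ∀ x ∈ F1, ∀ y ∈ F2,
      ξ x * ξ y ∈ (1 : FractionalIdeal (nonZeroDivisors ↥S) (FractionRing ↥S)) := by
    intro x hx y hy
    have hxyT : x * y ∈ (1 : FractionalIdeal (nonZeroDivisors ↥T) (FractionRing ↥T)) := by
      rw [← huu]
      exact FractionalIdeal.mul_mem_mul (SetLike.mem_coe.mp (hF1 (Finset.mem_coe.mpr hx)))
        (SetLike.mem_coe.mp (hF2 (Finset.mem_coe.mpr hy)))
    have hmulE : x * y ∈ F1 * F2 := Finset.mul_mem_mul hx hy
    refine (FractionalIdeal.mem_one_iff _).mpr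
      ⟨⟨((vv (x * y) : ↥T) : K), hvvS _ hmulE⟩, ?_⟩
    apply hg
    rw [hgalg]
    have e : ι (⟨((vv (x * y) : ↥T) : K), hvvS _ hmulE⟩ : ↥S) = vv (x * y) := Subtype.ext rfl
    rw [e, _root_.map_mul, hgξ x (hF1E x hx), hgξ y (hF2E y hy)]
    exact hvv (x * y) hxyT
  have hJJ'le : J * J' ≤ 1 := by
    rw [hJ_def, hJ'_def, Finset.sum_mul_sum]
    refine fiSum_le _ _ ?_
    intro x hx
    refine fiSum_le _ _ ?_
    intro y hy
    rw [FractionalIdeal.spanSingleton_mul_spanSingleton]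
    exact FractionalIdeal.spanSingleton_le_iff_mem.mpr (hprod x hx y hy)
  have hmul1 : (1 : FractionalIdeal (nonZeroDivisors ↥S) (FractionRing ↥S)) ≤ J * J' := by
    have hterm : ∀ z ∈ cf.support, ξ (xx z) * ξ (yy z) ∈ J * J' := by
      intro z hz
      obtain ⟨hx1, hy2, _⟩ := hxy z hz
      refine FractionalIdeal.mul_mem_mul ?_ ?_
      · exact FractionalIdeal.spanSingleton_le_iff_mem.mp
          (le_fiSum F1 (fun x => FractionalIdeal.spanSingleton (nonZeroDivisors ↥S) (ξ x)) hx1)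
      · exact FractionalIdeal.spanSingleton_le_iff_mem.mp
          (le_fiSum F2 (fun y => FractionalIdeal.spanSingleton (nonZeroDivisors ↥S) (ξ y)) hy2)
    set cS : FractionRing ↥T → ↥S := fun z =>
      if h : z ∈ cf.support then ⟨((cf z : ↥T) : K), hcfS z h⟩ else 0 with hcS_def
    have hone1 : (1 : FractionRing ↥S) = ∑ z ∈ cf.support, cS z • (ξ (xx z) * ξ (yy z)) := by
      apply hg
      rw [map_one, map_sum]
      have htermeq : ∀ z ∈ cf.support, gmap (cS z • (ξ (xx z) * ξ (yy z))) = cf z • z := by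
        intro z hz
        obtain ⟨hx1, hy2, hzz⟩ := hxy z hz
        rw [Algebra.smul_def, _root_.map_mul, hgalg]
        have e : ι (cS z) = cf z := by
          simp only [hcS_def, dif_pos hz]
          exact Subtype.ext rfl
        rw [e, _root_.map_mul, hgξ _ (hF1E _ hx1), hgξ _ (hF2E _ hy2), hzz, ← Algebra.smul_def]
      rw [Finset.sum_congr rfl htermeq]
      exact hsum.symm
    rw [← FractionalIdeal.spanSingleton_one (S := nonZeroDivisors ↥S)]
    rw [FractionalIdeal.spanSingleton_le_iff_mem, hone1, ← FractionalIdeal.mem_coe]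
    refine Submodule.sum_mem _ ?_
    intro z hz
    exact Submodule.smul_mem _ _ (FractionalIdeal.mem_coe.mpr (hterm z hz))
  have hJJ' : J * J' = 1 := le_antisymm hJJ'le hmul1
  have heJ : extFrac ι hι J = ∑ x ∈ F1, FractionalIdeal.spanSingleton (nonZeroDivisors ↥T) x := by
    rw [hJ_def, extFrac_sum]
    refine Finset.sum_congr rfl ?_
    intro x hx
    rw [extFrac_spanSingleton]
    congr 1
    exact hgξ x (hF1E x hx)
  have heJ' : extFrac ι hι J'
      = ∑ y ∈ F2, FractionalIdeal.spanSingleton (nonZeroDivisors ↥T) y := by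
    rw [hJ'_def, extFrac_sum]
    refine Finset.sum_congr rfl ?_
    intro y hy
    rw [extFrac_spanSingleton]
    congr 1
    exact hgξ y (hF2E y hy)
  have hle1 : extFrac ι hι J ≤ uu := by
    rw [heJ]
    refine fiSum_le _ _ ?_
    intro x hx
    exact FractionalIdeal.spanSingleton_le_iff_mem.mpr
      (SetLike.mem_coe.mp (hF1 (Finset.mem_coe.mpr hx)))
  have hle2 : extFrac ι hι J' ≤ uinv := by
    rw [heJ']
    refine fiSum_le _ _ ?_
    intro y hy
    exact FractionalIdeal.spanSingleton_le_iff_mem.mpr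
      (SetLike.mem_coe.mp (hF2 (Finset.mem_coe.mpr hy)))
  have hmulJ : extFrac ι hι J * extFrac ι hι J' = 1 := by
    rw [← _root_.map_mul, hJJ', _root_.map_one]
  have hextJ : extFrac ι hι J = uu := by
    refine le_antisymm hle1 ?_
    have h3 : uu * extFrac ι hι J' ≤ 1 := by
      rw [← huu]
      exact _root_.mul_le_mul_right hle2 uu
    calc uu = uu * (extFrac ι hι J' * extFrac ι hι J) := by
          rw [mul_comm (extFrac ι hι J') (extFrac ι hι J), hmulJ, mul_one]
      _ = uu * extFrac ι hι J' * extFrac ι hι J := (mul_assoc _ _ _).symm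
      _ ≤ 1 * extFrac ι hι J := _root_.mul_le_mul_left h3 _
      _ = extFrac ι hι J := one_mul _
  set uJ : (FractionalIdeal (nonZeroDivisors ↥S) (FractionRing ↥S))ˣ :=
    ⟨J, J', hJJ', by rw [mul_comm]; exact hJJ'⟩ with huJ_def
  obtain ⟨d, hd⟩ := hsurj S hSL (ClassGroup.mk (FractionRing ↥S) uJ)
  refine ⟨d, ?_⟩
  have htrans : picExt hDT d = picExt hST (picExt (hLD S hSL) d) :=
    picExt_trans (hLD S hSL) hST d
  rw [htrans, hd]
  rw [show picExt hST (ClassGroup.mk (FractionRing ↥S) uJ) = ClassGroup.mk (FractionRing ↥T)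
      (Units.map (extFrac (Subring.inclusion hST) (subringInclusion_injective hST)) uJ)
    from mapCG_mk _ _ uJ]
  congr 1
  apply Units.ext
  exact hextJ
end
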